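/- arXiv:2105.12954 — 2 statements merged into one kernel-verified Lean document; each statement's English description precedes it below -/
import Mathlib

section
/- Hessian lower bound for the dilated entropy on chains of scaled extensions of simplexes. In the simplex chain-of-scaled-extensions setup, for arbitrary positive coefficients α_1,…,α_n, for every x = (x_1,…,x_n) ∈ (relint Δ^{s_1}) ◁^{h_1} ⋯ ◁^{h_{n−1}} (relint Δ^{s_n}) and every m = (m_1,…,m_n) ∈ ℝ^{s_1}×⋯×ℝ^{s_n}: m^⊤ ∇²ψ(x) m ≥ Σ_{k=1}^n Σ_{i=1}^{s_k} ( α_k/2 − Σ_{p=k}^{n−1} α_{p+1}·‖a_p‖₀·a_{p,k}[i] ) · m_k[i]² / x_k[i]. -/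
open Finset Filter

section Machinery
variable {E : Type*} [NormedAddCommGroup E] [NormedSpace ℝ E] {x : E}

/-- `f` has, near `x`, a first derivative `f'` whose derivative at `x` is a continuous
bilinear map agreeing with `Q`. -/
def HasSecondAt (f : E → ℝ) (x : E) (Q : E → E → ℝ) : Prop :=
  ∃ B : E →L[ℝ] E →L[ℝ] ℝ, (∀ m m', B m m' = Q m m') ∧
    ∃ f' : E → (E →L[ℝ] ℝ), (∀ᶠ y in nhds x, HasFDerivAt f (f' y) y) ∧ HasFDerivAt f' B x

theorem HasSecondAt.iteratedFDeriv_apply_of_eventuallyEq {f g : E → ℝ} {Q : E → E → ℝ}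
    (hfg : f =ᶠ[nhds x] g) (h : HasSecondAt g x Q) (m m' : E) :
    iteratedFDeriv ℝ 2 f x ![m, m'] = Q m m' := by
  obtain ⟨B, hBQ, g', hg', hB⟩ := h
  have h2 : ∀ᶠ y in nhds x, ∀ᶠ z in nhds y, f z = g z := eventually_eventually_nhds.2 hfg
  have h1 : ∀ᶠ y in nhds x, HasFDerivAt f (g' y) y := by
    filter_upwards [h2, hg'] with y hy hgy
    exact hgy.congr_of_eventuallyEq hy
  have h3 : fderiv ℝ f =ᶠ[nhds x] g' := h1.mono fun y hy => hy.fderiv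
  rw [iteratedFDeriv_two_apply, h3.fderiv_eq, hB.fderiv]
  simp [hBQ]

theorem hasSecondAt_const (c : ℝ) (x : E) : HasSecondAt (fun _ => c) x (fun _ _ => 0) :=
  ⟨0, by simp, fun _ => 0, Filter.Eventually.of_forall fun y => hasFDerivAt_const c y,
    hasFDerivAt_const 0 x⟩

theorem hasSecondAt_clm (u : E →L[ℝ] ℝ) (x : E) :
    HasSecondAt (fun y => u y) x (fun _ _ => 0) :=
  ⟨0, by simp, fun _ => u, Filter.Eventually.of_forall fun y => u.hasFDerivAt,
    hasFDerivAt_const u x⟩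

theorem HasSecondAt.add {f g : E → ℝ} {Qf Qg : E → E → ℝ}
    (hf : HasSecondAt f x Qf) (hg : HasSecondAt g x Qg) :
    HasSecondAt (fun y => f y + g y) x (fun m m' => Qf m m' + Qg m m') := by
  obtain ⟨B, hBQ, f', hf', hB⟩ := hf
  obtain ⟨C, hCQ, g', hg', hC⟩ := hg
  refine ⟨B + C, by simp [hBQ, hCQ], fun y => f' y + g' y, ?_, hB.add hC⟩
  filter_upwards [hf', hg'] with y h1 h2 using h1.add h2

theorem HasSecondAt.sub {f g : E → ℝ} {Qf Qg : E → E → ℝ}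
    (hf : HasSecondAt f x Qf) (hg : HasSecondAt g x Qg) :
    HasSecondAt (fun y => f y - g y) x (fun m m' => Qf m m' - Qg m m') := by
  obtain ⟨B, hBQ, f', hf', hB⟩ := hf
  obtain ⟨C, hCQ, g', hg', hC⟩ := hg
  refine ⟨B - C, by simp [hBQ, hCQ], fun y => f' y - g' y, ?_, hB.sub hC⟩
  filter_upwards [hf', hg'] with y h1 h2 using h1.sub h2

theorem HasSecondAt.const_mul {f : E → ℝ} {Qf : E → E → ℝ}
    (hf : HasSecondAt f x Qf) (c : ℝ) :
    HasSecondAt (fun y => c * f y) x (fun m m' => c * Qf m m') := by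
  obtain ⟨B, hBQ, f', hf', hB⟩ := hf
  refine ⟨c • B, by simp [hBQ], fun y => c • f' y, ?_, hB.const_smul c⟩
  filter_upwards [hf'] with y h1 using h1.const_mul c

theorem hasSecondAt_sum {ι : Type*} {t : Finset ι} {f : ι → E → ℝ} {Q : ι → E → E → ℝ}
    (h : ∀ j ∈ t, HasSecondAt (f j) x (Q j)) :
    HasSecondAt (fun y => ∑ j ∈ t, f j y) x (fun m m' => ∑ j ∈ t, Q j m m') := by
  classical
  induction t using Finset.induction with
  | empty => simpa using hasSecondAt_const 0 x
  | insert _ _ hnm ih =>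
    simp only [Finset.sum_insert hnm]
    exact (h _ (Finset.mem_insert_self _ _)).add (ih fun j hj => h j (Finset.mem_insert_of_mem hj))

theorem hasSecondAt_mul_log (u v : E →L[ℝ] ℝ) (hv : 0 < v x) :
    HasSecondAt (fun y => u y * Real.log (v y)) x
      (fun m m' => (v m * u m' + u m * v m') / v x - u x * (v m * v m') / (v x) ^ 2) := by
  have hvx : v x ≠ 0 := ne_of_gt hv
  set f' : E → E →L[ℝ] ℝ := fun y => Real.log (v y) • u + (u y * (v y)⁻¹) • v with hf'def
  have hlog : ∀ y : E, 0 < v y → HasFDerivAt (fun z => Real.log (v z)) ((v y)⁻¹ • v) y := by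
    intro y hy
    exact (Real.hasDerivAt_log (ne_of_gt hy)).comp_hasFDerivAt y v.hasFDerivAt
  have hev : ∀ᶠ y in nhds x, 0 < v y :=
    v.continuous.continuousAt.eventually (lt_mem_nhds hv)
  have h1 : ∀ᶠ y in nhds x, HasFDerivAt (fun z => u z * Real.log (v z)) (f' y) y := by
    filter_upwards [hev] with y hy
    have := u.hasFDerivAt (x := y) |>.mul (hlog y hy)
    refine this.congr_fderiv ?_
    rw [hf'def]
    ext z
    simp [smul_smul]
    ring
  have hinv : HasFDerivAt (fun y => (v y)⁻¹) ((-((v x) ^ 2)⁻¹) • v) x :=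
    (hasDerivAt_inv hvx).comp_hasFDerivAt x v.hasFDerivAt
  have hlx := hlog x hv
  have hterm1 : HasFDerivAt (fun y => Real.log (v y) • u)
      (Real.log (v x) • (0 : E →L[ℝ] E →L[ℝ] ℝ) + ((v x)⁻¹ • v).smulRight u) x :=
    hlx.smul (hasFDerivAt_const u x)
  have hc2 : HasFDerivAt (fun y => u y * (v y)⁻¹)
      (u x • ((-((v x) ^ 2)⁻¹) • v) + (v x)⁻¹ • u) x := u.hasFDerivAt.mul hinv
  have hterm2 : HasFDerivAt (fun y => (u y * (v y)⁻¹) • v)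
      ((u x * (v x)⁻¹) • (0 : E →L[ℝ] E →L[ℝ] ℝ) +
        (u x • ((-((v x) ^ 2)⁻¹) • v) + (v x)⁻¹ • u).smulRight v) x :=
    hc2.smul (hasFDerivAt_const v x)
  have hB : HasFDerivAt f'
      ((Real.log (v x) • (0 : E →L[ℝ] E →L[ℝ] ℝ) + ((v x)⁻¹ • v).smulRight u) +
       ((u x * (v x)⁻¹) • (0 : E →L[ℝ] E →L[ℝ] ℝ) +
        (u x • ((-((v x) ^ 2)⁻¹) • v) + (v x)⁻¹ • u).smulRight v)) x := hterm1.add hterm2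
  refine ⟨_, ?_, f', h1, hB⟩
  intro m m'
  simp only [ContinuousLinearMap.add_apply, ContinuousLinearMap.smul_apply,
    ContinuousLinearMap.zero_apply, ContinuousLinearMap.smulRight_apply, smul_eq_mul]
  field_simp
  ring

end Machinery

theorem pos_of_mem_intrinsicInterior_stdSimplex {d : ℕ} {v : Fin d → ℝ}
    (hv : v ∈ intrinsicInterior ℝ (stdSimplex ℝ (Fin d))) (i : Fin d) : 0 < v i := by
  have hmem : v ∈ stdSimplex ℝ (Fin d) := intrinsicInterior_subset hv
  rcases (hmem.1 i).lt_or_eq with h | h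
  · exact h
  exfalso
  have h0 : v i = 0 := h.symm
  have hsum : ∑ j, v j = 1 := hmem.2
  have hex : ∃ j, v j ≠ 0 := by
    by_contra hc
    push_neg at hc
    simp [hc] at hsum
  obtain ⟨j, hj⟩ := hex
  have hij : j ≠ i := fun hji => hj (hji ▸ h0)
  set w : Fin d → ℝ := Pi.single j 1 - Pi.single i 1 with hw
  have hwi : w i = -1 := by
    simp [hw, Pi.single_apply, hij]
  have hwdir : w ∈ (affineSpan ℝ (stdSimplex ℝ (Fin d))).direction := by
    have h1 := subset_affineSpan ℝ (stdSimplex ℝ (Fin d)) (single_mem_stdSimplex ℝ j)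
    have h2 := subset_affineSpan ℝ (stdSimplex ℝ (Fin d)) (single_mem_stdSimplex ℝ i)
    simpa [hw] using AffineSubspace.vsub_mem_direction h1 h2
  rw [mem_intrinsicInterior] at hv
  obtain ⟨y, hy, hyx⟩ := hv
  rw [mem_interior_iff_mem_nhds, Metric.mem_nhds_iff] at hy
  obtain ⟨ε, hε, hball⟩ := hy
  set t : ℝ := ε / (2 * (‖w‖ + 1)) with ht
  have hwnn : (0:ℝ) ≤ ‖w‖ := norm_nonneg w
  have htpos : 0 < t := by positivity
  have hmemspan : v + t • w ∈ affineSpan ℝ (stdSimplex ℝ (Fin d)) := by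
    have := AffineSubspace.vadd_mem_of_mem_direction
      (Submodule.smul_mem _ t hwdir) (subset_affineSpan ℝ _ hmem)
    simpa [vadd_eq_add, add_comm] using this
  set z : affineSpan ℝ (stdSimplex ℝ (Fin d)) := ⟨v + t • w, hmemspan⟩ with hz
  have hzball : z ∈ Metric.ball y ε := by
    rw [Metric.mem_ball, Subtype.dist_eq, hz, hyx]
    have : dist (v + t • w) v = t * ‖w‖ := by
      rw [dist_eq_norm]
      simp [norm_smul, abs_of_pos htpos]
    rw [this, ht]
    rw [div_mul_eq_mul_div, div_lt_iff₀ (by positivity)]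
    nlinarith
  have hzs : (v + t • w) ∈ stdSimplex ℝ (Fin d) := hball hzball
  have := hzs.1 i
  rw [Pi.add_apply, Pi.smul_apply, h0, hwi] at this
  simp at this
  nlinarith

set_option maxHeartbeats 2000000 in
/-- **Hessian lower bound for the dilated entropy on chains of scaled extensions of
simplexes.** For arbitrary positive coefficients, at every point of
`(relint Δ^{s_1}) ◁^{h_1} ⋯ ◁^{h_{n−1}} (relint Δ^{s_n})` and every direction `m`:
`m^⊤ ∇²ψ(x) m ≥ ∑_k ∑_i (α_k/2 − ∑_{p>k} α_p·‖a_p‖₀·a_{p,k}[i]) · m_k[i]² / x_k[i]`. -/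
theorem simplex_chain_dilated_entropy_hessian_bound
    {n : ℕ} (hn : 0 < n)
    (s : Fin n → ℕ) (hs : ∀ k, 0 < s k)
    (a : (k : Fin n) → (q : Fin n) → Fin (s q) → ℝ)
    (ha : ∀ k q, q < k → ∀ i, a k q i ∈ Set.Icc (0 : ℝ) 1)
    (H : Fin n → ((k : Fin n) → Fin (s k) → ℝ) → ℝ)
    (hHdef : ∀ k x, H k x = ∑ q ∈ Finset.univ.filter (fun q => q < k), ∑ i, a k q i * x q i)
    (memX memRelX : ((k : Fin n) → Fin (s k) → ℝ) → Prop)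
    (hmemX : ∀ x, memX x ↔ ∀ k : Fin n,
        (k.val = 0 → x k ∈ stdSimplex ℝ (Fin (s k))) ∧
        (k.val ≠ 0 → ∃ v ∈ stdSimplex ℝ (Fin (s k)), x k = H k x • v))
    (hmemRelX : ∀ x, memRelX x ↔ ∀ k : Fin n,
        (k.val = 0 → x k ∈ intrinsicInterior ℝ (stdSimplex ℝ (Fin (s k)))) ∧
        (k.val ≠ 0 → ∃ v ∈ intrinsicInterior ℝ (stdSimplex ℝ (Fin (s k))), x k = H k x • v))
    (hH01 : ∀ x, memX x → ∀ k : Fin n, k.val ≠ 0 → 0 ≤ H k x ∧ H k x ≤ 1)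
    (hHpos : ∀ x, memRelX x → ∀ k : Fin n, k.val ≠ 0 → 0 < H k x)
    (α : Fin n → ℝ) (hα : ∀ k, 0 < α k)
    (ψ : ((k : Fin n) → Fin (s k) → ℝ) → ℝ)
    (hψ : ψ = fun x =>
      α ⟨0, hn⟩ * (Real.log ((s ⟨0, hn⟩ : ℝ)) + ∑ i, x ⟨0, hn⟩ i * Real.log (x ⟨0, hn⟩ i))
      + ∑ k ∈ Finset.univ.filter (fun k : Fin n => k.val ≠ 0),
          α k * (H k x * Real.log ((s k : ℝ))
            + ∑ i, x k i * Real.log (x k i / H k x))) :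
    ∀ x, memRelX x → ∀ m : (k : Fin n) → Fin (s k) → ℝ,
      iteratedFDeriv ℝ 2 ψ x ![m, m]
      ≥ ∑ k, ∑ i, (α k / 2 - ∑ p ∈ Finset.univ.filter (fun p => k < p),
            α p * ((∑ q ∈ Finset.univ.filter (fun q => q < p),
                (Finset.univ.filter (fun i : Fin (s q) => a p q i ≠ 0)).card : ℕ) : ℝ)
              * a p k i)
          * (m k i) ^ 2 / x k i := by
  classical
  intro x hx m
  set k0 : Fin n := ⟨0, hn⟩ with hk0def
  -- coordinate functionals
  set e : (k : Fin n) → Fin (s k) → (((k : Fin n) → Fin (s k) → ℝ) →L[ℝ] ℝ) := fun k i =>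
    (ContinuousLinearMap.proj i).comp (ContinuousLinearMap.proj (R := ℝ)
      (φ := fun k : Fin n => Fin (s k) → ℝ) k) with hedef
  have he : ∀ k i (y : (k : Fin n) → Fin (s k) → ℝ), e k i y = y k i := fun k i y => rfl
  set V : Fin n → (((k : Fin n) → Fin (s k) → ℝ) →L[ℝ] ℝ) := fun k =>
    ∑ q ∈ Finset.univ.filter (fun q => q < k), ∑ i, a k q i • e q i with hVdef
  have hVH : ∀ (k : Fin n) (y : (k : Fin n) → Fin (s k) → ℝ), V k y = H k y := by
    intro k y
    rw [hHdef]
    simp [hVdef, he, ContinuousLinearMap.sum_apply]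
  -- facts at x
  have hx' := (hmemRelX x).1 hx
  have xpos : ∀ (k : Fin n) i, 0 < x k i := by
    intro k i
    by_cases hk : k.val = 0
    · exact pos_of_mem_intrinsicInterior_stdSimplex ((hx' k).1 hk) i
    · obtain ⟨v, hv, hxk⟩ := (hx' k).2 hk
      have := pos_of_mem_intrinsicInterior_stdSimplex hv i
      have hH := hHpos x hx k hk
      rw [hxk]
      simpa using mul_pos hH this
  have xsum : ∀ k : Fin n, k.val ≠ 0 → ∑ i, x k i = H k x := by
    intro k hk
    obtain ⟨v, hv, hxk⟩ := (hx' k).2 hk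
    have hv1 : ∑ i, v i = 1 := (intrinsicInterior_subset hv).2
    rw [hxk]
    simp only [Pi.smul_apply, smul_eq_mul, ← Finset.mul_sum, hv1, mul_one]
  have hVpos : ∀ k : Fin n, k.val ≠ 0 → 0 < V k x := fun k hk => by
    rw [hVH]; exact hHpos x hx k hk
  -- second-derivative pieces
  have hzz : ∀ (k : Fin n) (i : Fin (s k)),
      HasSecondAt (fun y => e k i y * Real.log (e k i y)) x
        (fun mm mm' => (e k i mm * e k i mm' + e k i mm * e k i mm') / e k i x
          - e k i x * (e k i mm * e k i mm') / (e k i x) ^ 2) :=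
    fun k i => hasSecondAt_mul_log (e k i) (e k i) (by rw [he]; exact xpos k i)
  have hS0 : HasSecondAt
      (fun y => α k0 * (Real.log ((s k0 : ℝ)) + ∑ i, e k0 i y * Real.log (e k0 i y))) x
      (fun mm mm' => α k0 * (0 + ∑ i,
        ((e k0 i mm * e k0 i mm' + e k0 i mm * e k0 i mm') / e k0 i x
          - e k0 i x * (e k0 i mm * e k0 i mm') / (e k0 i x) ^ 2))) :=
    ((hasSecondAt_const _ x).add (hasSecondAt_sum (fun i _ => hzz k0 i))).const_mul (α k0)
  have hSk : ∀ k ∈ Finset.univ.filter (fun k : Fin n => k.val ≠ 0),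
      HasSecondAt (fun y => α k * (Real.log ((s k : ℝ)) * V k y +
          ∑ i, (e k i y * Real.log (e k i y) - e k i y * Real.log (V k y)))) x
        (fun mm mm' => α k * (Real.log ((s k : ℝ)) * 0 +
          ∑ i, (((e k i mm * e k i mm' + e k i mm * e k i mm') / e k i x
                - e k i x * (e k i mm * e k i mm') / (e k i x) ^ 2)
             - ((V k mm * e k i mm' + e k i mm * V k mm') / V k x
                - e k i x * (V k mm * V k mm') / (V k x) ^ 2)))) := by
    intro k hk
    have hkne : k.val ≠ 0 := (Finset.mem_filter.1 hk).2
    exact (((hasSecondAt_clm (V k) x).const_mul (Real.log ((s k : ℝ)))).add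
      (hasSecondAt_sum (fun (i : Fin (s k)) _ =>
        (hzz k i).sub (hasSecondAt_mul_log (e k i) (V k) (hVpos k hkne))))).const_mul (α k)
  have hTot : HasSecondAt
      (fun y => (α k0 * (Real.log ((s k0 : ℝ)) + ∑ i, e k0 i y * Real.log (e k0 i y)))
        + ∑ k ∈ Finset.univ.filter (fun k : Fin n => k.val ≠ 0),
            α k * (Real.log ((s k : ℝ)) * V k y +
              ∑ i, (e k i y * Real.log (e k i y) - e k i y * Real.log (V k y)))) x
      (fun mm mm' => (α k0 * (0 + ∑ i,
          ((e k0 i mm * e k0 i mm' + e k0 i mm * e k0 i mm') / e k0 i x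
            - e k0 i x * (e k0 i mm * e k0 i mm') / (e k0 i x) ^ 2)))
        + ∑ k ∈ Finset.univ.filter (fun k : Fin n => k.val ≠ 0),
            α k * (Real.log ((s k : ℝ)) * 0 + ∑ i, (((e k i mm * e k i mm' + e k i mm * e k i mm') / e k i x
                - e k i x * (e k i mm * e k i mm') / (e k i x) ^ 2)
             - ((V k mm * e k i mm' + e k i mm * V k mm') / V k x
                - e k i x * (V k mm * V k mm') / (V k x) ^ 2)))) :=
    hS0.add (hasSecondAt_sum hSk)
  -- ψ agrees with this representative near x
  have hpos : ∀ᶠ y in nhds x, ∀ (k : Fin n) (i : Fin (s k)), 0 < y k i := by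
    rw [Filter.eventually_all]
    intro k
    rw [Filter.eventually_all]
    intro i
    exact (e k i).continuous.continuousAt.eventually (lt_mem_nhds (xpos k i))
  have hVev : ∀ᶠ y in nhds x, ∀ k : Fin n, k.val ≠ 0 → 0 < V k y := by
    rw [Filter.eventually_all]
    intro k
    by_cases hk : k.val = 0
    · exact Eventually.of_forall (fun y hne => absurd hk hne)
    · filter_upwards [(V k).continuous.continuousAt.eventually
        (lt_mem_nhds (hVpos k hk))] with y hy _
      exact hy
  have hEq : ψ =ᶠ[nhds x]
      (fun y => (α k0 * (Real.log ((s k0 : ℝ)) + ∑ i, e k0 i y * Real.log (e k0 i y)))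
        + ∑ k ∈ Finset.univ.filter (fun k : Fin n => k.val ≠ 0),
            α k * (Real.log ((s k : ℝ)) * V k y +
              ∑ i, (e k i y * Real.log (e k i y) - e k i y * Real.log (V k y)))) := by
    filter_upwards [hpos, hVev] with y hposy hVy
    simp only [hψ, he]
    congr 1
    apply Finset.sum_congr rfl
    intro k hk
    have hkne := (Finset.mem_filter.1 hk).2
    have hVky : 0 < V k y := hVy k hkne
    rw [← hVH]
    rw [mul_comm (V k y)]
    congr 1
    congr 1
    apply Finset.sum_congr rfl
    intro i _
    rw [Real.log_div (ne_of_gt (hposy k i)) (ne_of_gt hVky)]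
    ring
  have hIter := HasSecondAt.iteratedFDeriv_apply_of_eventuallyEq hEq hTot m m
  rw [ge_iff_le, hIter]
  simp only [he]
  -- notation-free abbreviated facts
  have hann : ∀ (k q : Fin n), q < k → ∀ i, 0 ≤ a k q i := fun k q hqk i => (ha k q hqk i).1
  have hP0 : ∀ k : Fin n, 0 ≤ ∑ i, m k i ^ 2 / x k i :=
    fun k => Finset.sum_nonneg fun i _ => div_nonneg (sq_nonneg _) (xpos k i).le
  have hN0 : ∀ k : Fin n, 0 ≤ ∑ q ∈ Finset.univ.filter (fun q => q < k),
      ∑ i, a k q i * m q i ^ 2 / x q i := by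
    intro k
    refine Finset.sum_nonneg fun q hq => Finset.sum_nonneg fun i _ => ?_
    exact div_nonneg (mul_nonneg (hann k q (Finset.mem_filter.1 hq).2 i) (sq_nonneg _))
      (xpos q i).le
  -- Cauchy-Schwarz I : (∑ m)² ≤ (∑ x) (∑ m²/x)
  have hMP : ∀ k : Fin n, (∑ i, m k i) ^ 2 ≤ (∑ i, x k i) * (∑ i, m k i ^ 2 / x k i) := by
    intro k
    have h1 : ∀ i : Fin (s k), m k i = Real.sqrt (x k i) * (m k i / Real.sqrt (x k i)) := by
      intro i
      have hs' : Real.sqrt (x k i) ≠ 0 := (Real.sqrt_pos.2 (xpos k i)).ne'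
      field_simp
    calc (∑ i, m k i) ^ 2
        = (∑ i, Real.sqrt (x k i) * (m k i / Real.sqrt (x k i))) ^ 2 := by
          rw [← Finset.sum_congr rfl fun i _ => (h1 i).symm]
      _ ≤ (∑ i, Real.sqrt (x k i) ^ 2) * (∑ i, (m k i / Real.sqrt (x k i)) ^ 2) :=
          sum_mul_sq_le_sq_mul_sq _ _ _
      _ = (∑ i, x k i) * (∑ i, m k i ^ 2 / x k i) := by
          congr 1
          · exact Finset.sum_congr rfl fun i _ => Real.sq_sqrt (xpos k i).le
          · refine Finset.sum_congr rfl fun i _ => ?_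
            rw [div_pow, Real.sq_sqrt (xpos k i).le]
  -- Cauchy-Schwarz II : (V k m)² ≤ (V k x) · N k
  have hwN : ∀ k : Fin n, k.val ≠ 0 → (V k m) ^ 2 ≤ (V k x) *
      (∑ q ∈ Finset.univ.filter (fun q => q < k), ∑ i, a k q i * m q i ^ 2 / x q i) := by
    intro k hkne
    set T := (Finset.univ.filter (fun q : Fin n => q < k)).sigma
      (fun q => (Finset.univ : Finset (Fin (s q)))) with hT
    have hmemT : ∀ p ∈ T, p.1 < k := fun p hp =>
      (Finset.mem_filter.1 (Finset.mem_sigma.1 hp).1).2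
    have hVapp : ∀ y : (k : Fin n) → Fin (s k) → ℝ,
        V k y = ∑ p ∈ T, a k p.1 p.2 * y p.1 p.2 := by
      intro y
      rw [hT, Finset.sum_sigma]
      simp [hVdef, he, ContinuousLinearMap.sum_apply]
    have hNsig : (∑ q ∈ Finset.univ.filter (fun q => q < k), ∑ i, a k q i * m q i ^ 2 / x q i)
        = ∑ p ∈ T, a k p.1 p.2 * m p.1 p.2 ^ 2 / x p.1 p.2 := by
      rw [hT, Finset.sum_sigma]
    have key := sum_mul_sq_le_sq_mul_sq T (fun p => Real.sqrt (a k p.1 p.2 * x p.1 p.2))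
      (fun p => a k p.1 p.2 * m p.1 p.2 / Real.sqrt (a k p.1 p.2 * x p.1 p.2))
    have h1 : ∑ p ∈ T, Real.sqrt (a k p.1 p.2 * x p.1 p.2) *
        (a k p.1 p.2 * m p.1 p.2 / Real.sqrt (a k p.1 p.2 * x p.1 p.2))
        = ∑ p ∈ T, a k p.1 p.2 * m p.1 p.2 := by
      refine Finset.sum_congr rfl fun p hp => ?_
      rcases (hann k p.1 (hmemT p hp) p.2).eq_or_lt with h0 | hpos'
      · rw [← h0]; simp
      · have hsq : Real.sqrt (a k p.1 p.2 * x p.1 p.2) ≠ 0 :=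
          (Real.sqrt_pos.2 (mul_pos hpos' (xpos p.1 p.2))).ne'
        rw [mul_comm, div_mul_cancel₀ _ hsq]
    have h2 : ∑ p ∈ T, Real.sqrt (a k p.1 p.2 * x p.1 p.2) ^ 2
        = ∑ p ∈ T, a k p.1 p.2 * x p.1 p.2 :=
      Finset.sum_congr rfl fun p hp =>
        Real.sq_sqrt (mul_nonneg (hann k p.1 (hmemT p hp) p.2) (xpos p.1 p.2).le)
    have h3 : ∑ p ∈ T, (a k p.1 p.2 * m p.1 p.2 / Real.sqrt (a k p.1 p.2 * x p.1 p.2)) ^ 2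
        = ∑ p ∈ T, a k p.1 p.2 * m p.1 p.2 ^ 2 / x p.1 p.2 := by
      refine Finset.sum_congr rfl fun p hp => ?_
      rcases (hann k p.1 (hmemT p hp) p.2).eq_or_lt with h0 | hpos'
      · rw [← h0]; simp
      · have hx' := xpos p.1 p.2
        rw [div_pow, Real.sq_sqrt (mul_pos hpos' hx').le]
        rw [mul_pow]
        field_simp
    rw [h1, h2, h3] at key
    rw [hVapp m, hVapp x, hNsig]
    exact key
  -- bound for the k = 0 block
  have hA : α k0 * ((∑ i, m k0 i ^ 2 / x k0 i) / 2
        - ∑ q ∈ Finset.univ.filter (fun q => q < k0), ∑ i, a k0 q i * m q i ^ 2 / x q i)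
      ≤ α k0 * (0 + ∑ i, ((m k0 i * m k0 i + m k0 i * m k0 i) / x k0 i
          - x k0 i * (m k0 i * m k0 i) / x k0 i ^ 2)) := by
    have hempty : Finset.univ.filter (fun q : Fin n => q < k0) = ∅ := by
      ext q
      simp [hk0def, Fin.lt_def]
    rw [hempty, Finset.sum_empty, sub_zero, zero_add]
    have hsimp : ∑ i, ((m k0 i * m k0 i + m k0 i * m k0 i) / x k0 i
        - x k0 i * (m k0 i * m k0 i) / x k0 i ^ 2) = ∑ i, m k0 i ^ 2 / x k0 i := by
      refine Finset.sum_congr rfl fun i _ => ?_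
      have hxne := (xpos k0 i).ne'
      field_simp
      ring
    rw [hsimp]
    have := hP0 k0
    nlinarith [hα k0]
  -- bound for the k ≠ 0 blocks
  have hB : ∀ k ∈ Finset.univ.filter (fun k : Fin n => k.val ≠ 0),
      α k * ((∑ i, m k i ^ 2 / x k i) / 2
        - ∑ q ∈ Finset.univ.filter (fun q => q < k), ∑ i, a k q i * m q i ^ 2 / x q i)
      ≤ α k * (Real.log ((s k : ℝ)) * 0 +
          ∑ i, (((m k i * m k i + m k i * m k i) / x k i
                - x k i * (m k i * m k i) / x k i ^ 2)
             - ((V k m * m k i + m k i * V k m) / V k x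
                - x k i * (V k m * V k m) / (V k x) ^ 2))) := by
    intro k hk
    have hkne := (Finset.mem_filter.1 hk).2
    have hh : 0 < V k x := hVpos k hkne
    have hsx : ∑ i, x k i = V k x := by rw [hVH]; exact xsum k hkne
    have hterm : ∀ i : Fin (s k),
        (((m k i * m k i + m k i * m k i) / x k i - x k i * (m k i * m k i) / x k i ^ 2)
          - ((V k m * m k i + m k i * V k m) / V k x
             - x k i * (V k m * V k m) / (V k x) ^ 2))
        = m k i ^ 2 / x k i - (2 * V k m / V k x) * m k i + x k i * (V k m ^ 2 / V k x ^ 2) := by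
      intro i
      have h1 := (xpos k i).ne'
      have h2 := hh.ne'
      field_simp
      ring
    have hsum_eq : ∑ i, (((m k i * m k i + m k i * m k i) / x k i
            - x k i * (m k i * m k i) / x k i ^ 2)
          - ((V k m * m k i + m k i * V k m) / V k x
             - x k i * (V k m * V k m) / (V k x) ^ 2))
        = (∑ i, m k i ^ 2 / x k i) - (2 * V k m / V k x) * (∑ i, m k i)
          + V k m ^ 2 / V k x := by
      rw [Finset.sum_congr rfl fun i _ => hterm i, Finset.sum_add_distrib,
        Finset.sum_sub_distrib, ← Finset.mul_sum, ← Finset.sum_mul, hsx]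
      congr 1
      field_simp
    rw [hsum_eq, mul_zero, zero_add]
    apply mul_le_mul_of_nonneg_left _ (hα k).le
    have hM2 := hMP k
    rw [hsx] at hM2
    have hw2 := hwN k hkne
    have hNk := hN0 k
    set P := ∑ i, m k i ^ 2 / x k i with hPd
    set Mm := ∑ i, m k i with hMd
    set w := V k m with hwd
    set h := V k x with hhd
    set N := ∑ q ∈ Finset.univ.filter (fun q => q < k), ∑ i, a k q i * m q i ^ 2 / x q i with hNd
    have key : P - 2 * w / h * Mm + w ^ 2 / h - (P / 2 - N)
        = (h * P / 2 - 2 * w * Mm + w ^ 2 + h * N) / h := by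
      field_simp
      ring
    have hnum : 0 ≤ h * P / 2 - 2 * w * Mm + w ^ 2 + h * N := by
      nlinarith [sq_nonneg (Mm - 2 * w)]
    have hd := div_nonneg hnum hh.le
    linarith [key ▸ hd]
  -- splitting ∑ over univ at k0
  have hsplit : ∀ F : Fin n → ℝ,
      ∑ k, F k = F k0 + ∑ k ∈ Finset.univ.filter (fun k : Fin n => k.val ≠ 0), F k := by
    intro F
    have h1 : Finset.univ.filter (fun k : Fin n => k.val = 0) = {k0} := by
      ext k
      simp [Fin.ext_iff, hk0def]
    have h2 := Finset.sum_filter_add_sum_filter_not Finset.univ (fun k : Fin n => k.val = 0) F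
    rw [h1, Finset.sum_singleton] at h2
    rw [← h2]
  -- the sum swap inequality
  have hsw : ∑ k, α k * (∑ q ∈ Finset.univ.filter (fun q => q < k),
        ∑ i, a k q i * m q i ^ 2 / x q i)
      ≤ ∑ k, ∑ i, (∑ p ∈ Finset.univ.filter (fun p => k < p),
          α p * ((∑ q ∈ Finset.univ.filter (fun q => q < p),
              (Finset.univ.filter (fun i : Fin (s q) => a p q i ≠ 0)).card : ℕ) : ℝ)
            * a p k i) * m k i ^ 2 / x k i := by
    have hL1 : ∀ k : Fin n, α k * (∑ q ∈ Finset.univ.filter (fun q => q < k),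
          ∑ i, a k q i * m q i ^ 2 / x q i)
        = ∑ q, (if q < k then α k * ∑ i, a k q i * m q i ^ 2 / x q i else 0) := by
      intro k
      rw [Finset.mul_sum, Finset.sum_filter]
    have hR1 : ∀ k : Fin n, ∑ i, (∑ p ∈ Finset.univ.filter (fun p => k < p),
          α p * ((∑ q ∈ Finset.univ.filter (fun q => q < p),
              (Finset.univ.filter (fun i : Fin (s q) => a p q i ≠ 0)).card : ℕ) : ℝ)
            * a p k i) * m k i ^ 2 / x k i
        = ∑ p, (if k < p then ∑ i, (α p * ((∑ q ∈ Finset.univ.filter (fun q => q < p),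
              (Finset.univ.filter (fun i : Fin (s q) => a p q i ≠ 0)).card : ℕ) : ℝ)
            * a p k i) * m k i ^ 2 / x k i else 0) := by
      intro k
      rw [← Finset.sum_filter]
      rw [Finset.sum_comm]
      refine Finset.sum_congr rfl fun i _ => ?_
      rw [Finset.sum_mul, Finset.sum_div]
    rw [Finset.sum_congr rfl fun k _ => hL1 k, Finset.sum_comm,
      Finset.sum_congr rfl fun k _ => hR1 k]
    refine Finset.sum_le_sum fun q _ => Finset.sum_le_sum fun p _ => ?_
    by_cases hqp : q < p
    · simp only [if_pos hqp]
      have hpne : p.val ≠ 0 := by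
        have := hqp
        rw [Fin.lt_def] at this
        omega
      have hC1 : (1:ℝ) ≤ ((∑ q' ∈ Finset.univ.filter (fun q' => q' < p),
          (Finset.univ.filter (fun i : Fin (s q') => a p q' i ≠ 0)).card : ℕ) : ℝ) := by
        rw [Nat.one_le_cast]
        rcases Nat.eq_zero_or_pos (∑ q' ∈ Finset.univ.filter (fun q' => q' < p),
            (Finset.univ.filter (fun i : Fin (s q') => a p q' i ≠ 0)).card) with h0 | h1
        · exfalso
          have hzero : ∀ q' ∈ Finset.univ.filter (fun q' : Fin n => q' < p),
              ∀ i, a p q' i = 0 := by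
            intro q' hq' i
            have hc := (Finset.sum_eq_zero_iff.1 h0) q' hq'
            have hfe : (Finset.univ.filter (fun i : Fin (s q') => a p q' i ≠ 0)) = ∅ :=
              Finset.card_eq_zero.1 hc
            by_contra hne
            have hmemi : i ∈ Finset.univ.filter (fun i : Fin (s q') => a p q' i ≠ 0) :=
              Finset.mem_filter.2 ⟨Finset.mem_univ i, hne⟩
            rw [hfe] at hmemi
            exact absurd hmemi (Finset.notMem_empty i)
          have hH0 : H p x = 0 := by
            rw [hHdef]
            refine Finset.sum_eq_zero fun q' hq' => Finset.sum_eq_zero fun i _ => ?_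
            rw [hzero q' hq' i, zero_mul]
          have := hHpos x hx p hpne
          rw [hH0] at this
          exact lt_irrefl 0 this
        · exact h1
      rw [Finset.mul_sum]
      refine Finset.sum_le_sum fun i _ => ?_
      have hD : 0 ≤ a p q i * m q i ^ 2 / x q i :=
        div_nonneg (mul_nonneg (hann p q hqp i) (sq_nonneg _)) (xpos q i).le
      have hRD : α p * ((∑ q' ∈ Finset.univ.filter (fun q' => q' < p),
            (Finset.univ.filter (fun i : Fin (s q') => a p q' i ≠ 0)).card : ℕ) : ℝ)
          * a p q i * m q i ^ 2 / x q i
          = α p * ((∑ q' ∈ Finset.univ.filter (fun q' => q' < p),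
            (Finset.univ.filter (fun i : Fin (s q') => a p q' i ≠ 0)).card : ℕ) : ℝ)
          * (a p q i * m q i ^ 2 / x q i) := by ring
      have hLD : α p * (a p q i * m q i ^ 2 / x q i)
          = α p * (a p q i * m q i ^ 2 / x q i) := rfl
      rw [hRD]
      nlinarith [mul_nonneg (mul_nonneg (hα p).le hD) (sub_nonneg.2 hC1)]
    · simp only [if_neg hqp]
      exact le_rfl
  -- main combination step
  have hC2 : ∑ k, ∑ i, (α k / 2 - ∑ p ∈ Finset.univ.filter (fun p => k < p),
        α p * ((∑ q ∈ Finset.univ.filter (fun q => q < p),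
            (Finset.univ.filter (fun i : Fin (s q) => a p q i ≠ 0)).card : ℕ) : ℝ)
          * a p k i) * m k i ^ 2 / x k i
      ≤ ∑ k, α k * ((∑ i, m k i ^ 2 / x k i) / 2
        - ∑ q ∈ Finset.univ.filter (fun q => q < k), ∑ i, a k q i * m q i ^ 2 / x q i) := by
    have hL : ∑ k, ∑ i, (α k / 2 - ∑ p ∈ Finset.univ.filter (fun p => k < p),
          α p * ((∑ q ∈ Finset.univ.filter (fun q => q < p),
              (Finset.univ.filter (fun i : Fin (s q) => a p q i ≠ 0)).card : ℕ) : ℝ)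
            * a p k i) * m k i ^ 2 / x k i
        = (∑ k, α k / 2 * ∑ i, m k i ^ 2 / x k i)
          - ∑ k, ∑ i, (∑ p ∈ Finset.univ.filter (fun p => k < p),
              α p * ((∑ q ∈ Finset.univ.filter (fun q => q < p),
                  (Finset.univ.filter (fun i : Fin (s q) => a p q i ≠ 0)).card : ℕ) : ℝ)
                * a p k i) * m k i ^ 2 / x k i := by
      rw [← Finset.sum_sub_distrib]
      refine Finset.sum_congr rfl fun k _ => ?_
      rw [Finset.mul_sum, ← Finset.sum_sub_distrib]
      refine Finset.sum_congr rfl fun i _ => ?_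
      rw [sub_mul, sub_div, mul_div_assoc]
    have hR : ∑ k, α k * ((∑ i, m k i ^ 2 / x k i) / 2
          - ∑ q ∈ Finset.univ.filter (fun q => q < k), ∑ i, a k q i * m q i ^ 2 / x q i)
        = (∑ k, α k / 2 * ∑ i, m k i ^ 2 / x k i)
          - ∑ k, α k * (∑ q ∈ Finset.univ.filter (fun q => q < k),
              ∑ i, a k q i * m q i ^ 2 / x q i) := by
      rw [← Finset.sum_sub_distrib]
      refine Finset.sum_congr rfl fun k _ => ?_
      ring
    rw [hL, hR]
    exact sub_le_sub_left hsw _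
  have hfinal := add_le_add hA (Finset.sum_le_sum hB)
  rw [← hsplit (fun k => α k * ((∑ i, m k i ^ 2 / x k i) / 2
    - ∑ q ∈ Finset.univ.filter (fun q => q < k), ∑ i, a k q i * m q i ^ 2 / x q i))] at hfinal
  exact le_trans hC2 hfinal
end

section
/- Proposition (strong convexity of the dilated entropy on chains of scaled extensions of simplexes). In the simplex chain-of-scaled-extensions setup, choose the coefficients recursively as α_n := 2 and α_k := 2 + 2·‖ Σ_{p=k}^{n−1} α_{p+1}·‖a_p‖₀·a_{p,k} ‖_∞ for k = n−1,…,1. Then for every x = (x_1,…,x_n) ∈ (relint Δ^{s_1}) ◁^{h_1} ⋯ ◁^{h_{n−1}} (relint Δ^{s_n}) and every m ∈ ℝ^{s_1+⋯+s_n}: m^⊤ ∇²ψ(x) m ≥ ‖m‖₂² and m^⊤ ∇²ψ(x) m ≥ (1/M_X)·‖m‖₁², where M_X := max_{x∈X} ‖x‖₁. That is, the dilated entropy is 1-strongly convex with respect to the Euclidean norm and (1/M_X)-strongly convex with respect to the ℓ₁ norm on relint X. -/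
open Finset

section helpers

variable {n : ℕ} {s : Fin n → ℕ}

noncomputable def pr (k : Fin n) (i : Fin (s k)) :
    ((k : Fin n) → Fin (s k) → ℝ) →L[ℝ] ℝ :=
  (ContinuousLinearMap.proj (R := ℝ) (φ := fun _ : Fin (s k) => ℝ) i).comp
    (ContinuousLinearMap.proj (R := ℝ) (φ := fun k => Fin (s k) → ℝ) k)

@[simp] lemma pr_apply (k : Fin n) (i : Fin (s k)) (y : (k : Fin n) → Fin (s k) → ℝ) :
    pr k i y = y k i := rfl

noncomputable def Aclm (a : (k : Fin n) → (q : Fin n) → Fin (s q) → ℝ) (k : Fin n) :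
    ((k : Fin n) → Fin (s k) → ℝ) →L[ℝ] ℝ :=
  ∑ q ∈ Finset.univ.filter (fun q => q < k), ∑ i, a k q i • pr q i

lemma Aclm_apply (a : (k : Fin n) → (q : Fin n) → Fin (s q) → ℝ) (k : Fin n)
    (y : (k : Fin n) → Fin (s k) → ℝ) :
    Aclm a k y = ∑ q ∈ Finset.univ.filter (fun q => q < k), ∑ i, a k q i * y q i := by
  simp [Aclm, ContinuousLinearMap.sum_apply, smul_eq_mul]

lemma Aclm_zero (a : (k : Fin n) → (q : Fin n) → Fin (s q) → ℝ) (k : Fin n)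
    (hk : k.val = 0) : Aclm a k = 0 := by
  have h : Finset.univ.filter (fun q : Fin n => q < k) = ∅ := by
    ext q
    simp only [mem_filter, mem_univ, true_and, Finset.notMem_empty, iff_false, Fin.lt_def, hk]
    omega
  simp [Aclm, h]

end helpers

lemma stdSimplex_intrinsicInterior_pos {N : ℕ} {v : Fin N → ℝ}
    (hv : v ∈ intrinsicInterior ℝ (stdSimplex ℝ (Fin N))) (i : Fin N) : 0 < v i := by
  have hv' : v ∈ stdSimplex ℝ (Fin N) := intrinsicInterior_subset hv
  rcases lt_or_eq_of_le (hv'.1 i) with h | h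
  · exact h
  exfalso
  obtain ⟨w, hw, hwv⟩ := hv
  have hei : (Pi.single i 1 : Fin N → ℝ) ∈ stdSimplex ℝ (Fin N) := single_mem_stdSimplex ℝ i
  have hvspan : v ∈ affineSpan ℝ (stdSimplex ℝ (Fin N)) := subset_affineSpan ℝ _ hv'
  have heispan : (Pi.single i 1 : Fin N → ℝ) ∈ affineSpan ℝ (stdSimplex ℝ (Fin N)) :=
    subset_affineSpan ℝ _ hei
  have hmem : ∀ t : ℝ, v + t • (v - Pi.single i 1) ∈ affineSpan ℝ (stdSimplex ℝ (Fin N)) := by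
    intro t
    have := AffineSubspace.smul_vsub_vadd_mem (affineSpan ℝ (stdSimplex ℝ (Fin N))) t
      hvspan heispan hvspan
    simpa [vsub_eq_sub, vadd_eq_add, add_comm] using this
  set c : ℝ → affineSpan ℝ (stdSimplex ℝ (Fin N)) :=
    fun t => ⟨v + t • (v - Pi.single i 1), hmem t⟩ with hc
  have hcont : Continuous c := by
    apply Continuous.subtype_mk
    continuity
  have hc0 : c 0 = w := by
    apply Subtype.ext
    simp [hc, hwv]
  have hwint : (Subtype.val ⁻¹' stdSimplex ℝ (Fin N) :
      Set (affineSpan ℝ (stdSimplex ℝ (Fin N)))) ∈ nhds w :=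
    mem_interior_iff_mem_nhds.1 hw
  have htend : Filter.Tendsto c (nhds 0) (nhds w) := by
    rw [← hc0]; exact hcont.tendsto 0
  have hev : ∀ᶠ t : ℝ in nhds 0, ((c t : Fin N → ℝ) ∈ stdSimplex ℝ (Fin N)) :=
    htend.eventually_mem hwint
  have hev' : ∀ᶠ t : ℝ in nhdsWithin 0 (Set.Ioi 0),
      ((c t : Fin N → ℝ) ∈ stdSimplex ℝ (Fin N)) ∧ t ∈ Set.Ioi (0:ℝ) :=
    (hev.filter_mono nhdsWithin_le_nhds).and self_mem_nhdsWithin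
  obtain ⟨t, hmem', ht⟩ := hev'.exists
  have hcoord : 0 ≤ ((v + t • (v - Pi.single i 1) : Fin N → ℝ)) i := hmem'.1 i
  have : ((v + t • (v - Pi.single i 1) : Fin N → ℝ)) i = -t := by
    simp [← h, Pi.single_apply]
  rw [this] at hcoord
  have : (0:ℝ) < t := ht
  linarith
open Finset

section calc1
variable {n : ℕ} {s : Fin n → ℕ}

lemma hasFDerivAt_log_clm (L : ((k : Fin n) → Fin (s k) → ℝ) →L[ℝ] ℝ)
    {y : (k : Fin n) → Fin (s k) → ℝ} (h : L y ≠ 0) :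
    HasFDerivAt (fun z => Real.log (L z)) ((L y)⁻¹ • L) y := by
  have := (Real.hasDerivAt_log h).comp_hasFDerivAt y L.hasFDerivAt
  exact this

lemma hasFDerivAt_log_clm' (L : ((k : Fin n) → Fin (s k) → ℝ) →L[ℝ] ℝ)
    {y : (k : Fin n) → Fin (s k) → ℝ} (h : L y ≠ 0 ∨ L = 0) :
    HasFDerivAt (fun z => Real.log (L z)) ((L y)⁻¹ • L) y := by
  rcases h with h | rfl
  · exact hasFDerivAt_log_clm L h
  · simpa using hasFDerivAt_const (Real.log 0) y

lemma hasFDerivAt_inv_clm (L : ((k : Fin n) → Fin (s k) → ℝ) →L[ℝ] ℝ)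
    {y : (k : Fin n) → Fin (s k) → ℝ} (h : L y ≠ 0) :
    HasFDerivAt (fun z => (L z)⁻¹) ((-(((L y) : ℝ) ^ 2)⁻¹) • L) y := by
  have := (hasDerivAt_inv h).comp_hasFDerivAt y L.hasFDerivAt
  exact this
end calc1
section calc2
variable {n : ℕ} {s : Fin n → ℕ}

/-- derivative of the entropy block without scaling -/
lemma hasFDerivAt_block0 (k : Fin n) {y : (k : Fin n) → Fin (s k) → ℝ}
    (hy : ∀ i, y k i ≠ 0) :
    HasFDerivAt (fun z : (k : Fin n) → Fin (s k) → ℝ => ∑ i, z k i * Real.log (z k i))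
      (∑ i, (Real.log (y k i) + 1) • pr k i) y := by
  have h : ∀ i : Fin (s k), HasFDerivAt
      (fun z : (k : Fin n) → Fin (s k) → ℝ => z k i * Real.log (z k i))
      ((Real.log (y k i) + 1) • pr k i) y := by
    intro i
    have h1 : HasFDerivAt (fun z : (k : Fin n) → Fin (s k) → ℝ => Real.log (z k i))
        ((y k i)⁻¹ • pr k i) y := hasFDerivAt_log_clm (pr k i) (hy i)
    have h2 := (pr k i).hasFDerivAt.mul h1
    simp only [pr_apply] at h2
    have h3 : y k i • ((y k i)⁻¹ • pr k i) + Real.log (y k i) • pr k i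
        = (Real.log (y k i) + 1) • pr k i := by
      rw [smul_smul, mul_inv_cancel₀ (hy i)]
      ext w
      simp [add_mul, add_comm]
    rw [h3] at h2
    exact h2
  exact HasFDerivAt.fun_sum (fun i _ => h i)

/-- derivative of a scaled entropy block -/
lemma hasFDerivAt_block (k : Fin n) (L : ((k : Fin n) → Fin (s k) → ℝ) →L[ℝ] ℝ) (c : ℝ)
    {y : (k : Fin n) → Fin (s k) → ℝ} (hy : ∀ i, 0 < y k i) (hL : 0 < L y) :
    HasFDerivAt (fun z : (k : Fin n) → Fin (s k) → ℝ =>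
        L z * c + ∑ i, z k i * Real.log (z k i / L z))
      ((c - (∑ i, y k i) / L y) • L
        + ∑ i, (Real.log (y k i) - Real.log (L y) + 1) • pr k i) y := by
  -- first establish the derivative of the version with log of quotient expanded
  have hmain : HasFDerivAt (fun z : (k : Fin n) → Fin (s k) → ℝ =>
      L z * c + ∑ i, z k i * (Real.log (z k i) - Real.log (L z)))
      ((c - (∑ i, y k i) / L y) • L
        + ∑ i, (Real.log (y k i) - Real.log (L y) + 1) • pr k i) y := by
    have h1 : HasFDerivAt (fun z : (k : Fin n) → Fin (s k) → ℝ => L z * c) (c • L) y :=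
      L.hasFDerivAt.mul_const c
    have h : ∀ i : Fin (s k), HasFDerivAt
        (fun z : (k : Fin n) → Fin (s k) → ℝ => z k i * (Real.log (z k i) - Real.log (L z)))
        ((Real.log (y k i) - Real.log (L y) + 1) • pr k i - (y k i * (L y)⁻¹) • L) y := by
      intro i
      have hl1 : HasFDerivAt (fun z : (k : Fin n) → Fin (s k) → ℝ => Real.log (z k i))
          ((y k i)⁻¹ • pr k i) y := hasFDerivAt_log_clm (pr k i) (hy i).ne'
      have hl2 := hasFDerivAt_log_clm L hL.ne'
      have h2 := (pr k i).hasFDerivAt.mul (hl1.fun_sub hl2)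
      simp only [pr_apply] at h2
      have h3 : y k i • ((y k i)⁻¹ • pr k i - (L y)⁻¹ • L)
            + (Real.log (y k i) - Real.log (L y)) • pr k i
          = (Real.log (y k i) - Real.log (L y) + 1) • pr k i - (y k i * (L y)⁻¹) • L := by
        rw [smul_sub, smul_smul, mul_inv_cancel₀ (hy i).ne', smul_smul]
        ext w
        simp only [ContinuousLinearMap.add_apply, ContinuousLinearMap.smul_apply,
          ContinuousLinearMap.sub_apply, ContinuousLinearMap.one_apply, one_smul, smul_eq_mul]
        ring
      rw [h3] at h2
      exact h2
    have hsum := HasFDerivAt.fun_sum (fun i (_ : i ∈ Finset.univ) => h i)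
    have h4 := h1.add hsum
    have h5 : c • L + ∑ i, ((Real.log (y k i) - Real.log (L y) + 1) • pr k i
          - (y k i * (L y)⁻¹) • L)
        = (c - (∑ i, y k i) / L y) • L
          + ∑ i, (Real.log (y k i) - Real.log (L y) + 1) • pr k i := by
      rw [Finset.sum_sub_distrib]
      ext w
      simp only [ContinuousLinearMap.add_apply, ContinuousLinearMap.sub_apply,
        ContinuousLinearMap.smul_apply, ContinuousLinearMap.sum_apply, smul_eq_mul,
        ← Finset.sum_mul, div_eq_mul_inv]
      ring
    rw [h5] at h4
    exact h4
  -- now transfer along an eventual equality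
  apply hmain.congr_of_eventuallyEq
  have hopen : IsOpen {z : (k : Fin n) → Fin (s k) → ℝ | (∀ i, 0 < z k i) ∧ 0 < L z} := by
    have h1 : IsOpen {z : (k : Fin n) → Fin (s k) → ℝ | ∀ i, 0 < z k i} := by
      have : {z : (k : Fin n) → Fin (s k) → ℝ | ∀ i, 0 < z k i}
          = ⋂ i, {z : (k : Fin n) → Fin (s k) → ℝ | 0 < z k i} := by
        ext z; simp
      rw [this]
      apply isOpen_iInter_of_finite
      intro i
      exact isOpen_lt continuous_const ((continuous_apply i).comp (continuous_apply k))
    exact h1.inter (isOpen_lt continuous_const L.continuous)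
  have hmm : {z : (k : Fin n) → Fin (s k) → ℝ | (∀ i, 0 < z k i) ∧ 0 < L z} ∈ nhds y :=
    hopen.mem_nhds ⟨hy, hL⟩
  filter_upwards [hmm] with z hz
  congr 1
  apply Finset.sum_congr rfl
  intro i _
  rw [Real.log_div (hz.1 i).ne' hz.2.ne']

end calc2
section grad
variable {n : ℕ} {s : Fin n → ℕ}

noncomputable def gradF (a : (k : Fin n) → (q : Fin n) → Fin (s q) → ℝ) (α : Fin n → ℝ)
    (y : (k : Fin n) → Fin (s k) → ℝ) : ((k : Fin n) → Fin (s k) → ℝ) →L[ℝ] ℝ :=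
  (∑ k, (α k) • (∑ i, (Real.log (y k i) - Real.log (Aclm a k y) + 1) • pr k i))
  + ∑ k ∈ Finset.univ.filter (fun k : Fin n => k.val ≠ 0),
      (α k * (Real.log ((s k : ℝ)) - (∑ i, y k i) / (Aclm a k y))) • Aclm a k

lemma gradF_apply (a : (k : Fin n) → (q : Fin n) → Fin (s q) → ℝ) (α : Fin n → ℝ)
    (y m : (k : Fin n) → Fin (s k) → ℝ) :
    gradF a α y m
      = ∑ k, α k * (∑ i, (Real.log (y k i) - Real.log (Aclm a k y) + 1) * m k i)
      + ∑ k ∈ Finset.univ.filter (fun k : Fin n => k.val ≠ 0),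
          (α k * (Real.log ((s k : ℝ)) - (∑ i, y k i) / (Aclm a k y))) * Aclm a k m := by
  simp [gradF, ContinuousLinearMap.sum_apply, Finset.mul_sum]

lemma hasFDerivAt_psi (hn : 0 < n)
    (a : (k : Fin n) → (q : Fin n) → Fin (s q) → ℝ) (α : Fin n → ℝ)
    {y : (k : Fin n) → Fin (s k) → ℝ}
    (hy : ∀ k i, 0 < y k i) (hA : ∀ k : Fin n, k.val ≠ 0 → 0 < Aclm a k y) :
    HasFDerivAt (fun z : (k : Fin n) → Fin (s k) → ℝ =>
        α ⟨0, hn⟩ * (Real.log ((s ⟨0, hn⟩ : ℝ)) + ∑ i, z ⟨0, hn⟩ i * Real.log (z ⟨0, hn⟩ i))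
        + ∑ k ∈ Finset.univ.filter (fun k : Fin n => k.val ≠ 0),
            α k * (Aclm a k z * Real.log ((s k : ℝ))
              + ∑ i, z k i * Real.log (z k i / Aclm a k z)))
      (gradF a α y) y := by
  classical
  set k0 : Fin n := ⟨0, hn⟩ with hk0
  have h0 : HasFDerivAt (fun z : (k : Fin n) → Fin (s k) → ℝ =>
      α k0 * (Real.log ((s k0 : ℝ)) + ∑ i, z k0 i * Real.log (z k0 i)))
      (α k0 • (∑ i, (Real.log (y k0 i) + 1) • pr k0 i)) y := by
    have := ((hasFDerivAt_block0 k0 (fun i => (hy k0 i).ne')).const_add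
      (Real.log ((s k0 : ℝ)))).const_mul (α k0)
    simpa using this
  have hks : ∀ k ∈ Finset.univ.filter (fun k : Fin n => k.val ≠ 0),
      HasFDerivAt (fun z : (k : Fin n) → Fin (s k) → ℝ =>
        α k * (Aclm a k z * Real.log ((s k : ℝ)) + ∑ i, z k i * Real.log (z k i / Aclm a k z)))
      (α k • ((Real.log ((s k : ℝ)) - (∑ i, y k i) / Aclm a k y) • Aclm a k
        + ∑ i, (Real.log (y k i) - Real.log (Aclm a k y) + 1) • pr k i)) y := by
    intro k hk
    simp only [Finset.mem_filter] at hk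
    exact (hasFDerivAt_block k (Aclm a k) (Real.log ((s k : ℝ))) (hy k) (hA k hk.2)).const_mul
      (α k)
  have htot := h0.add (HasFDerivAt.fun_sum hks)
  have heq : α k0 • (∑ i, (Real.log (y k0 i) + 1) • pr k0 i)
      + ∑ k ∈ Finset.univ.filter (fun k : Fin n => k.val ≠ 0),
          α k • ((Real.log ((s k : ℝ)) - (∑ i, y k i) / Aclm a k y) • Aclm a k
            + ∑ i, (Real.log (y k i) - Real.log (Aclm a k y) + 1) • pr k i)
      = gradF a α y := by
    rw [gradF]
    have e0 : Finset.univ.filter (fun k : Fin n => k.val = 0) = {k0} := by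
      ext k
      simp [Fin.ext_iff, hk0]
    rw [← Finset.sum_filter_add_sum_filter_not Finset.univ (fun k : Fin n => k.val = 0)
      (fun k => (α k) • (∑ i, (Real.log (y k i) - Real.log (Aclm a k y) + 1) • pr k i)), e0,
      Finset.sum_singleton]
    have e1 : Aclm a k0 = 0 := Aclm_zero a k0 rfl
    have e2 : (α k0) • (∑ i, (Real.log (y k0 i) - Real.log (Aclm a k0 y) + 1) • pr k0 i)
        = α k0 • (∑ i, (Real.log (y k0 i) + 1) • pr k0 i) := by
      rw [e1]
      simp
    rw [e2]
    rw [add_assoc]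
    congr 1
    rw [← Finset.sum_add_distrib]
    apply Finset.sum_congr rfl
    intro k _
    rw [smul_add, smul_smul, add_comm]
  rw [heq] at htot
  exact htot

end grad
section grad2
variable {n : ℕ} {s : Fin n → ℕ}

lemma aclm_pos_or_zero (a : (k : Fin n) → (q : Fin n) → Fin (s q) → ℝ)
    {y : (k : Fin n) → Fin (s k) → ℝ} (hA : ∀ k : Fin n, k.val ≠ 0 → 0 < Aclm a k y)
    (k : Fin n) : Aclm a k y ≠ 0 ∨ Aclm a k = 0 := by
  by_cases hk : k.val = 0
  · exact Or.inr (Aclm_zero a k hk)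
  · exact Or.inl (hA k hk).ne'

lemma differentiableAt_gradF (a : (k : Fin n) → (q : Fin n) → Fin (s q) → ℝ) (α : Fin n → ℝ)
    {x : (k : Fin n) → Fin (s k) → ℝ}
    (hx : ∀ k i, 0 < x k i) (hA : ∀ k : Fin n, k.val ≠ 0 → 0 < Aclm a k x) :
    DifferentiableAt ℝ (gradF a α) x := by
  apply DifferentiableAt.add
  · apply DifferentiableAt.fun_sum
    intro k _
    apply DifferentiableAt.fun_const_smul
    apply DifferentiableAt.fun_sum
    intro i _
    apply DifferentiableAt.fun_smul _ (differentiableAt_const _)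
    apply DifferentiableAt.add_const
    exact ((hasFDerivAt_log_clm (pr k i) (hx k i).ne').differentiableAt).sub
      (hasFDerivAt_log_clm' (Aclm a k) (aclm_pos_or_zero a hA k)).differentiableAt
  · apply DifferentiableAt.fun_sum
    intro k hk
    simp only [Finset.mem_filter] at hk
    apply DifferentiableAt.fun_smul _ (differentiableAt_const _)
    apply DifferentiableAt.const_mul
    apply DifferentiableAt.const_sub
    have hdiv : (fun y : (k : Fin n) → Fin (s k) → ℝ => (∑ i, y k i) / Aclm a k y)
        = fun y => (∑ i, y k i) * (Aclm a k y)⁻¹ := funext fun y => div_eq_mul_inv _ _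
    rw [hdiv]
    exact (DifferentiableAt.fun_sum fun i _ => ((pr k i).hasFDerivAt.differentiableAt)).mul
      (hasFDerivAt_inv_clm (Aclm a k) (hA k hk.2).ne').differentiableAt

lemma hasFDerivAt_gradF_apply
    (a : (k : Fin n) → (q : Fin n) → Fin (s q) → ℝ) (α : Fin n → ℝ)
    (m : (k : Fin n) → Fin (s k) → ℝ) {x : (k : Fin n) → Fin (s k) → ℝ}
    (hx : ∀ k i, 0 < x k i) (hA : ∀ k : Fin n, k.val ≠ 0 → 0 < Aclm a k x) :
    HasFDerivAt (fun y => gradF a α y m)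
      ((∑ k, (α k) • (∑ i, (m k i) • ((x k i)⁻¹ • pr k i - (Aclm a k x)⁻¹ • Aclm a k)))
        + ∑ k ∈ Finset.univ.filter (fun k : Fin n => k.val ≠ 0),
            (Aclm a k m) • (α k • (((∑ i, x k i) * ((Aclm a k x) ^ 2)⁻¹) • Aclm a k
              - (Aclm a k x)⁻¹ • (∑ i, pr k i)))) x := by
  classical
  have hfun : (fun y => gradF a α y m)
      = fun y => (∑ k, α k * (∑ i, (Real.log (y k i) - Real.log (Aclm a k y) + 1) * m k i))
      + ∑ k ∈ Finset.univ.filter (fun k : Fin n => k.val ≠ 0),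
          (α k * (Real.log ((s k : ℝ)) - (∑ i, y k i) * (Aclm a k y)⁻¹)) * Aclm a k m := by
    funext y
    rw [gradF_apply]
    simp [div_eq_mul_inv]
  rw [hfun]
  apply HasFDerivAt.add
  · apply HasFDerivAt.fun_sum
    intro k _
    have hterm : ∀ i : Fin (s k), HasFDerivAt
        (fun y : (k : Fin n) → Fin (s k) → ℝ =>
          (Real.log (y k i) - Real.log (Aclm a k y) + 1) * m k i)
        ((m k i) • ((x k i)⁻¹ • pr k i - (Aclm a k x)⁻¹ • Aclm a k)) x := by
      intro i
      have h1 := ((hasFDerivAt_log_clm (pr k i) (hx k i).ne').sub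
        (hasFDerivAt_log_clm' (Aclm a k) (aclm_pos_or_zero a hA k))).add_const 1
      exact h1.mul_const (m k i)
    have := (HasFDerivAt.fun_sum (fun i (_ : i ∈ Finset.univ) => hterm i)).const_mul (α k)
    simpa [Finset.mul_sum] using this
  · apply HasFDerivAt.fun_sum
    intro k hk
    simp only [Finset.mem_filter] at hk
    have hS : HasFDerivAt (fun y : (k : Fin n) → Fin (s k) → ℝ => ∑ i, y k i)
        (∑ i, pr k i) x := HasFDerivAt.fun_sum (fun i (_ : i ∈ Finset.univ) => (pr k i).hasFDerivAt)
    have hinv := hasFDerivAt_inv_clm (Aclm a k) (hA k hk.2).ne'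
    have hq := hS.mul hinv
    have hg := (hq.const_sub (Real.log ((s k : ℝ)))).const_mul (α k)
    have := hg.mul_const (Aclm a k m)
    have heq : (Aclm a k m) • (α k • (-((∑ i, x k i) • ((-(Aclm a k x ^ 2)⁻¹) • Aclm a k)
          + (Aclm a k x)⁻¹ • (∑ i, pr k i))))
        = (Aclm a k m) • (α k • (((∑ i, x k i) * ((Aclm a k x) ^ 2)⁻¹) • Aclm a k
          - (Aclm a k x)⁻¹ • (∑ i, pr k i))) := by
      congr 1
      congr 1
      ext w
      simp only [ContinuousLinearMap.add_apply, ContinuousLinearMap.sub_apply,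
        ContinuousLinearMap.smul_apply, ContinuousLinearMap.neg_apply,
        ContinuousLinearMap.sum_apply, smul_eq_mul]
      ring
    rw [← heq]
    exact this

end grad2
section ineq
variable {n : ℕ} {s : Fin n → ℕ}

lemma filter_lt_zero_eq_empty {k : Fin n} (hk : k.val = 0) :
    Finset.univ.filter (fun q : Fin n => q < k) = ∅ := by
  ext q
  simp only [Finset.mem_filter, Finset.mem_univ, true_and, Finset.notMem_empty, iff_false,
    Fin.lt_def, hk]
  omega

lemma alpha_ge_two (hs : ∀ k, 0 < s k) (a : (k : Fin n) → (q : Fin n) → Fin (s q) → ℝ)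
    (α : Fin n → ℝ)
    (hαrec : ∀ k : Fin n, α k = 2 + 2 *
        (Finset.univ.sup' (Finset.univ_nonempty_iff.mpr (Fin.pos_iff_nonempty.mp (hs k)))
          (fun i : Fin (s k) =>
            |∑ p ∈ Finset.univ.filter (fun p => k < p),
              α p * ((∑ q ∈ Finset.univ.filter (fun q => q < p),
                  (Finset.univ.filter (fun i : Fin (s q) => a p q i ≠ 0)).card : ℕ) : ℝ)
                * a p k i|))) (k : Fin n) : 2 ≤ α k := by
  rw [hαrec k]
  have h0 : (0:ℝ) ≤ (Finset.univ.sup' (Finset.univ_nonempty_iff.mpr (Fin.pos_iff_nonempty.mp (hs k)))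
          (fun i : Fin (s k) =>
            |∑ p ∈ Finset.univ.filter (fun p => k < p),
              α p * ((∑ q ∈ Finset.univ.filter (fun q => q < p),
                  (Finset.univ.filter (fun i : Fin (s q) => a p q i ≠ 0)).card : ℕ) : ℝ)
                * a p k i|)) := by
    refine le_trans (abs_nonneg _) (Finset.le_sup' (fun i : Fin (s k) =>
            |∑ p ∈ Finset.univ.filter (fun p => k < p),
              α p * ((∑ q ∈ Finset.univ.filter (fun q => q < p),
                  (Finset.univ.filter (fun i : Fin (s q) => a p q i ≠ 0)).card : ℕ) : ℝ)
                * a p k i|) (Finset.mem_univ ⟨0, hs k⟩))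
  linarith

lemma coeff_bound (hs : ∀ k, 0 < s k) (a : (k : Fin n) → (q : Fin n) → Fin (s q) → ℝ)
    (ha : ∀ k q, q < k → ∀ i, a k q i ∈ Set.Icc (0 : ℝ) 1)
    (α : Fin n → ℝ)
    (hαrec : ∀ k : Fin n, α k = 2 + 2 *
        (Finset.univ.sup' (Finset.univ_nonempty_iff.mpr (Fin.pos_iff_nonempty.mp (hs k)))
          (fun i : Fin (s k) =>
            |∑ p ∈ Finset.univ.filter (fun p => k < p),
              α p * ((∑ q ∈ Finset.univ.filter (fun q => q < p),
                  (Finset.univ.filter (fun i : Fin (s q) => a p q i ≠ 0)).card : ℕ) : ℝ)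
                * a p k i|)))
    (q : Fin n) (i : Fin (s q)) :
    (∑ p ∈ Finset.univ.filter (fun p => q < p), α p * a p q i) + 1 ≤ α q / 2 := by
  have hα2 := alpha_ge_two hs a α hαrec
  have s1 : ∑ p ∈ Finset.univ.filter (fun p => q < p), α p * a p q i
      ≤ ∑ p ∈ Finset.univ.filter (fun p => q < p),
          α p * ((∑ q' ∈ Finset.univ.filter (fun q' => q' < p),
              (Finset.univ.filter (fun i : Fin (s q') => a p q' i ≠ 0)).card : ℕ) : ℝ)
            * a p q i := by
    apply Finset.sum_le_sum
    intro p hp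
    simp only [Finset.mem_filter, Finset.mem_univ, true_and] at hp
    have ha0 : 0 ≤ a p q i := (ha p q hp i).1
    rcases eq_or_lt_of_le ha0 with h | h
    · rw [← h]; simp
    · have hN : (1:ℝ) ≤ ((∑ q' ∈ Finset.univ.filter (fun q' => q' < p),
          (Finset.univ.filter (fun i : Fin (s q') => a p q' i ≠ 0)).card : ℕ) : ℝ) := by
        rw [Nat.one_le_cast]
        calc 1 ≤ (Finset.univ.filter (fun i' : Fin (s q) => a p q i' ≠ 0)).card := by
              rw [Nat.one_le_iff_ne_zero, ← Nat.pos_iff_ne_zero, Finset.card_pos]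
              exact ⟨i, by simp [h.ne']⟩
          _ ≤ _ := Finset.single_le_sum (f := fun q' =>
              (Finset.univ.filter (fun i' : Fin (s q') => a p q' i' ≠ 0)).card)
              (fun _ _ => Nat.zero_le _) (by simp [hp])
      have hαp : 0 ≤ α p := by linarith [hα2 p]
      calc α p * a p q i = α p * (1 * a p q i) := by ring
        _ ≤ α p * (((∑ q' ∈ Finset.univ.filter (fun q' => q' < p),
              (Finset.univ.filter (fun i : Fin (s q') => a p q' i ≠ 0)).card : ℕ) : ℝ) * a p q i) :=
            mul_le_mul_of_nonneg_left (mul_le_mul_of_nonneg_right hN ha0) hαp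
        _ = _ := by ring
  have s2 : ∑ p ∈ Finset.univ.filter (fun p => q < p),
          α p * ((∑ q' ∈ Finset.univ.filter (fun q' => q' < p),
              (Finset.univ.filter (fun i : Fin (s q') => a p q' i ≠ 0)).card : ℕ) : ℝ)
            * a p q i
      ≤ (Finset.univ.sup' (Finset.univ_nonempty_iff.mpr (Fin.pos_iff_nonempty.mp (hs q)))
          (fun i : Fin (s q) =>
            |∑ p ∈ Finset.univ.filter (fun p => q < p),
              α p * ((∑ q' ∈ Finset.univ.filter (fun q' => q' < p),
                  (Finset.univ.filter (fun i : Fin (s q') => a p q' i ≠ 0)).card : ℕ) : ℝ)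
                * a p q i|)) :=
    le_trans (le_abs_self _) (Finset.le_sup' (fun i : Fin (s q) =>
            |∑ p ∈ Finset.univ.filter (fun p => q < p),
              α p * ((∑ q' ∈ Finset.univ.filter (fun q' => q' < p),
                  (Finset.univ.filter (fun i : Fin (s q') => a p q' i ≠ 0)).card : ℕ) : ℝ)
                * a p q i|) (Finset.mem_univ i))
  have := hαrec q
  linarith

end ineq
section qbound
variable {n : ℕ} {s : Fin n → ℕ}

/-- Cauchy–Schwarz for one block -/
lemma cs_block (k : Fin n) (x m : (k : Fin n) → Fin (s k) → ℝ) (hx : ∀ i, 0 < x k i) :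
    (∑ i, m k i) ^ 2 ≤ (∑ i, x k i) * ∑ i, m k i ^ 2 / x k i := by
  apply Finset.sum_sq_le_sum_mul_sum_of_sq_eq_mul
  · exact fun i _ => (hx i).le
  · exact fun i _ => div_nonneg (sq_nonneg _) (hx i).le
  · intro i _
    rw [mul_div_assoc', mul_comm, mul_div_assoc, div_self (hx i).ne', mul_one]

/-- Cauchy–Schwarz for the linear functional -/
lemma cs_lin (k : Fin n) (a : (k : Fin n) → (q : Fin n) → Fin (s q) → ℝ)
    (ha : ∀ k q, q < k → ∀ i, a k q i ∈ Set.Icc (0 : ℝ) 1)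
    (x m : (k : Fin n) → Fin (s k) → ℝ) (hx : ∀ q i, 0 < x q i) :
    (Aclm a k m) ^ 2 ≤ (Aclm a k x) *
      ∑ q ∈ Finset.univ.filter (fun q => q < k), ∑ i, a k q i * (m q i ^ 2 / x q i) := by
  rw [Aclm_apply, Aclm_apply]
  rw [Finset.sum_sigma' (Finset.univ.filter (fun q : Fin n => q < k)) (fun _ => Finset.univ)
      (fun q i => a k q i * m q i),
    Finset.sum_sigma' (Finset.univ.filter (fun q : Fin n => q < k)) (fun _ => Finset.univ)
      (fun q i => a k q i * x q i),
    Finset.sum_sigma' (Finset.univ.filter (fun q : Fin n => q < k)) (fun _ => Finset.univ)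
      (fun q i => a k q i * (m q i ^ 2 / x q i))]
  apply Finset.sum_sq_le_sum_mul_sum_of_sq_eq_mul
  · intro p hp
    simp only [Finset.mem_sigma, Finset.mem_filter, Finset.mem_univ, true_and] at hp
    exact mul_nonneg (ha k p.1 hp.1 p.2).1 (hx p.1 p.2).le
  · intro p hp
    simp only [Finset.mem_sigma, Finset.mem_filter, Finset.mem_univ, true_and] at hp
    exact mul_nonneg (ha k p.1 hp.1 p.2).1 (div_nonneg (sq_nonneg _) (hx p.1 p.2).le)
  · intro p hp
    have hne := (hx p.1 p.2).ne'
    field_simp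
end qbound
section qb2
variable {n : ℕ} {s : Fin n → ℕ}

lemma block_est (k : Fin n) (a : (k : Fin n) → (q : Fin n) → Fin (s q) → ℝ)
    (ha : ∀ k q, q < k → ∀ i, a k q i ∈ Set.Icc (0 : ℝ) 1)
    (x m : (k : Fin n) → Fin (s k) → ℝ) (hx : ∀ q i, 0 < x q i)
    (hH : 0 < Aclm a k x) (hSx : ∑ i, x k i = Aclm a k x) :
    (∑ i, m k i ^ 2 / x k i) / 2
      - ∑ q ∈ Finset.univ.filter (fun q => q < k), ∑ i, a k q i * (m q i ^ 2 / x q i)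
    ≤ (∑ i, m k i ^ 2 / x k i)
      - 2 * (∑ i, m k i) * Aclm a k m / Aclm a k x + (Aclm a k m) ^ 2 / Aclm a k x := by
  set T : ℝ := ∑ i, m k i ^ 2 / x k i with hT
  set W : ℝ := ∑ q ∈ Finset.univ.filter (fun q => q < k), ∑ i, a k q i * (m q i ^ 2 / x q i)
    with hW
  set Mk : ℝ := ∑ i, m k i with hMk
  set h : ℝ := Aclm a k m with hh
  set Hk : ℝ := Aclm a k x with hHk
  have invH : (0:ℝ) < Hk⁻¹ := inv_pos.mpr hH
  have cs1 : Mk ^ 2 ≤ Hk * T := by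
    have := cs_block k x m (fun i => hx k i)
    rwa [hSx] at this
  have cs2 : h ^ 2 ≤ Hk * W := cs_lin k a ha x m hx
  have c1 : Mk ^ 2 * Hk⁻¹ ≤ T := by
    have := mul_le_mul_of_nonneg_right cs1 invH.le
    rwa [mul_comm Hk T, mul_assoc, mul_inv_cancel₀ hH.ne', mul_one] at this
  have c2 : h ^ 2 * Hk⁻¹ ≤ W := by
    have := mul_le_mul_of_nonneg_right cs2 invH.le
    rwa [mul_comm Hk W, mul_assoc, mul_inv_cancel₀ hH.ne', mul_one] at this
  have am : 2 * (Mk * h) ≤ Mk ^ 2 / 2 + 2 * h ^ 2 := by nlinarith [sq_nonneg (Mk - 2 * h)]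
  have c3 : 2 * Mk * h * Hk⁻¹ ≤ (Mk ^ 2 / 2) * Hk⁻¹ + 2 * (h ^ 2 * Hk⁻¹) := by
    have := mul_le_mul_of_nonneg_right am invH.le
    calc 2 * Mk * h * Hk⁻¹ = 2 * (Mk * h) * Hk⁻¹ := by ring
      _ ≤ (Mk ^ 2 / 2 + 2 * h ^ 2) * Hk⁻¹ := this
      _ = (Mk ^ 2 / 2) * Hk⁻¹ + 2 * (h ^ 2 * Hk⁻¹) := by ring
  rw [div_eq_mul_inv (2 * Mk * h), div_eq_mul_inv (h ^ 2)]
  have e : (Mk ^ 2 / 2) * Hk⁻¹ = (Mk ^ 2 * Hk⁻¹) / 2 := by ring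
  rw [e] at c3
  linarith [c1, c2, c3]

end qb2
section sd
variable {n : ℕ} {s : Fin n → ℕ}

lemma second_deriv_eq (hn : 0 < n)
    (a : (k : Fin n) → (q : Fin n) → Fin (s q) → ℝ) (α : Fin n → ℝ)
    {x : (k : Fin n) → Fin (s k) → ℝ} (m : (k : Fin n) → Fin (s k) → ℝ)
    (hx : ∀ k i, 0 < x k i) (hA : ∀ k : Fin n, k.val ≠ 0 → 0 < Aclm a k x) :
    iteratedFDeriv ℝ 2 (fun z : (k : Fin n) → Fin (s k) → ℝ =>
        α ⟨0, hn⟩ * (Real.log ((s ⟨0, hn⟩ : ℝ)) + ∑ i, z ⟨0, hn⟩ i * Real.log (z ⟨0, hn⟩ i))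
        + ∑ k ∈ Finset.univ.filter (fun k : Fin n => k.val ≠ 0),
            α k * (Aclm a k z * Real.log ((s k : ℝ))
              + ∑ i, z k i * Real.log (z k i / Aclm a k z))) x ![m, m]
      = (∑ k, α k * (∑ i, m k i * ((x k i)⁻¹ * m k i - (Aclm a k x)⁻¹ * Aclm a k m)))
        + ∑ k ∈ Finset.univ.filter (fun k : Fin n => k.val ≠ 0),
            Aclm a k m * (α k * ((∑ i, x k i) * ((Aclm a k x) ^ 2)⁻¹ * Aclm a k m
              - (Aclm a k x)⁻¹ * (∑ i, m k i))) := by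
  classical
  have h1o : IsOpen {y : (k : Fin n) → Fin (s k) → ℝ | ∀ k i, 0 < y k i} := by
    have e : {y : (k : Fin n) → Fin (s k) → ℝ | ∀ k i, 0 < y k i}
        = ⋂ k, ⋂ i, {y : (k : Fin n) → Fin (s k) → ℝ | 0 < y k i} := by
      ext y; simp
    rw [e]
    exact isOpen_iInter_of_finite fun k => isOpen_iInter_of_finite fun i =>
      isOpen_lt continuous_const ((continuous_apply i).comp (continuous_apply k))
  have h2o : IsOpen {y : (k : Fin n) → Fin (s k) → ℝ |
      ∀ k : Fin n, k.val ≠ 0 → 0 < Aclm a k y} := by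
    have e : {y : (k : Fin n) → Fin (s k) → ℝ | ∀ k : Fin n, k.val ≠ 0 → 0 < Aclm a k y}
        = ⋂ k : Fin n, {y : (k : Fin n) → Fin (s k) → ℝ | k.val ≠ 0 → 0 < Aclm a k y} := by
      ext y; simp
    rw [e]
    refine isOpen_iInter_of_finite fun k => ?_
    by_cases hk : k.val = 0
    · have e2 : {y : (k : Fin n) → Fin (s k) → ℝ | k.val ≠ 0 → 0 < Aclm a k y}
          = Set.univ := by
        ext y; simp [hk]
      rw [e2]; exact isOpen_univ
    · have e2 : {y : (k : Fin n) → Fin (s k) → ℝ | k.val ≠ 0 → 0 < Aclm a k y}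
          = {y : (k : Fin n) → Fin (s k) → ℝ | 0 < Aclm a k y} := by
        ext y; simp [hk]
      rw [e2]; exact isOpen_lt continuous_const (Aclm a k).continuous
  have hnhds : {y : (k : Fin n) → Fin (s k) → ℝ | ∀ k i, 0 < y k i}
      ∩ {y : (k : Fin n) → Fin (s k) → ℝ | ∀ k : Fin n, k.val ≠ 0 → 0 < Aclm a k y}
      ∈ nhds x := (h1o.inter h2o).mem_nhds ⟨hx, hA⟩
  have hev : fderiv ℝ (fun z : (k : Fin n) → Fin (s k) → ℝ =>
        α ⟨0, hn⟩ * (Real.log ((s ⟨0, hn⟩ : ℝ)) + ∑ i, z ⟨0, hn⟩ i * Real.log (z ⟨0, hn⟩ i))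
        + ∑ k ∈ Finset.univ.filter (fun k : Fin n => k.val ≠ 0),
            α k * (Aclm a k z * Real.log ((s k : ℝ))
              + ∑ i, z k i * Real.log (z k i / Aclm a k z)))
      =ᶠ[nhds x] gradF a α := by
    filter_upwards [hnhds] with y hy
    exact (hasFDerivAt_psi hn a α hy.1 hy.2).fderiv
  rw [iteratedFDeriv_two_apply, hev.fderiv_eq]
  simp only [Matrix.cons_val_zero, Matrix.cons_val_one, Matrix.head_cons]
  have hdiff := differentiableAt_gradF a α hx hA
  have happ := hasFDerivAt_gradF_apply a α m hx hA
  have h1 : fderiv ℝ (fun y => gradF a α y m) x = (fderiv ℝ (gradF a α) x).flip m := by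
    rw [fderiv_clm_apply hdiff (differentiableAt_const m)]
    simp
  have h2 : fderiv ℝ (gradF a α) x m m = fderiv ℝ (fun y => gradF a α y m) x m := by
    rw [h1]; rfl
  rw [h2, happ.fderiv]
  simp only [ContinuousLinearMap.add_apply, ContinuousLinearMap.sum_apply,
    ContinuousLinearMap.smul_apply, ContinuousLinearMap.sub_apply, pr_apply, smul_eq_mul]

end sd
section swap
variable {n : ℕ} {s : Fin n → ℕ}

lemma swap_sum (a : (k : Fin n) → (q : Fin n) → Fin (s q) → ℝ) (α : Fin n → ℝ)
    (g : (q : Fin n) → Fin (s q) → ℝ) :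
    ∑ k ∈ Finset.univ.filter (fun k : Fin n => k.val ≠ 0),
        α k * (∑ q ∈ Finset.univ.filter (fun q => q < k), ∑ i, a k q i * g q i)
      = ∑ q, ∑ i, g q i * (∑ p ∈ Finset.univ.filter (fun p => q < p), α p * a p q i) := by
  classical
  have e1 : ∑ k ∈ Finset.univ.filter (fun k : Fin n => k.val ≠ 0),
        α k * (∑ q ∈ Finset.univ.filter (fun q => q < k), ∑ i, a k q i * g q i)
      = ∑ k, α k * (∑ q ∈ Finset.univ.filter (fun q => q < k), ∑ i, a k q i * g q i) := by
    apply Finset.sum_filter_of_ne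
    intro k _ hne
    intro hk0
    apply hne
    rw [filter_lt_zero_eq_empty hk0]
    simp
  rw [e1]
  have e2 : ∀ k : Fin n, α k * (∑ q ∈ Finset.univ.filter (fun q => q < k), ∑ i, a k q i * g q i)
      = ∑ q, if q < k then (∑ i, α k * (a k q i * g q i)) else 0 := by
    intro k
    rw [Finset.mul_sum, Finset.sum_filter]
    apply Finset.sum_congr rfl
    intro q _
    by_cases h : q < k
    · simp [h, Finset.mul_sum]
    · simp [h]
  simp_rw [e2]
  rw [Finset.sum_comm]
  apply Finset.sum_congr rfl
  intro q _
  rw [← Finset.sum_filter, Finset.sum_comm]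
  apply Finset.sum_congr rfl
  intro i _
  rw [Finset.mul_sum]
  apply Finset.sum_congr rfl
  intro p _
  ring

end swap
section qfinal
variable {n : ℕ} {s : Fin n → ℕ}

lemma Qbound (hn : 0 < n)
    (a : (k : Fin n) → (q : Fin n) → Fin (s q) → ℝ)
    (ha : ∀ k q, q < k → ∀ i, a k q i ∈ Set.Icc (0 : ℝ) 1)
    (α : Fin n → ℝ) (hα2 : ∀ k, 2 ≤ α k)
    (hcoeff : ∀ (q : Fin n) (i : Fin (s q)),
      (∑ p ∈ Finset.univ.filter (fun p => q < p), α p * a p q i) + 1 ≤ α q / 2)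
    (x m : (k : Fin n) → Fin (s k) → ℝ)
    (hx : ∀ k i, 0 < x k i) (hA : ∀ k : Fin n, k.val ≠ 0 → 0 < Aclm a k x)
    (hSx : ∀ k : Fin n, k.val ≠ 0 → ∑ i, x k i = Aclm a k x) :
    ∑ k, ∑ i, m k i ^ 2 / x k i
      ≤ (∑ k, α k * (∑ i, m k i * ((x k i)⁻¹ * m k i - (Aclm a k x)⁻¹ * Aclm a k m)))
        + ∑ k ∈ Finset.univ.filter (fun k : Fin n => k.val ≠ 0),
            Aclm a k m * (α k * ((∑ i, x k i) * ((Aclm a k x) ^ 2)⁻¹ * Aclm a k m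
              - (Aclm a k x)⁻¹ * (∑ i, m k i))) := by
  classical
  set k0 : Fin n := ⟨0, hn⟩ with hk0
  have e0 : Finset.univ.filter (fun k : Fin n => ¬ k.val ≠ 0) = {k0} := by
    ext k
    simp [Fin.ext_iff, hk0]
  have hT0 : ∀ k : Fin n, (0:ℝ) ≤ ∑ i, m k i ^ 2 / x k i :=
    fun k => Finset.sum_nonneg fun i _ => div_nonneg (sq_nonneg _) (hx k i).le
  -- rewrite the first sum of the target
  have inner_eq : ∀ k : Fin n,
      α k * (∑ i, m k i * ((x k i)⁻¹ * m k i - (Aclm a k x)⁻¹ * Aclm a k m))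
      = α k * ((∑ i, m k i ^ 2 / x k i)
          - (∑ i, m k i) * ((Aclm a k x)⁻¹ * Aclm a k m)) := by
    intro k
    congr 1
    have hterm : ∀ i : Fin (s k), m k i * ((x k i)⁻¹ * m k i - (Aclm a k x)⁻¹ * Aclm a k m)
        = m k i ^ 2 / x k i - m k i * ((Aclm a k x)⁻¹ * Aclm a k m) := by
      intro i
      rw [div_eq_mul_inv]
      ring
    rw [Finset.sum_congr rfl (fun i _ => hterm i), Finset.sum_sub_distrib, ← Finset.sum_mul]
  have step1 : (∑ k, α k * (∑ i, m k i * ((x k i)⁻¹ * m k i - (Aclm a k x)⁻¹ * Aclm a k m)))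
      = α k0 * (∑ i, m k0 i ^ 2 / x k0 i)
        + ∑ k ∈ Finset.univ.filter (fun k : Fin n => k.val ≠ 0),
            α k * ((∑ i, m k i ^ 2 / x k i)
              - (∑ i, m k i) * ((Aclm a k x)⁻¹ * Aclm a k m)) := by
    rw [← Finset.sum_filter_add_sum_filter_not Finset.univ (fun k : Fin n => k.val ≠ 0)
      (fun k => α k * (∑ i, m k i * ((x k i)⁻¹ * m k i - (Aclm a k x)⁻¹ * Aclm a k m))), e0,
      Finset.sum_singleton, add_comm]
    congr 1
    · rw [Aclm_zero a k0 rfl]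
      simp only [ContinuousLinearMap.zero_apply, mul_zero, inv_zero, zero_mul, sub_zero]
      congr 1
      apply Finset.sum_congr rfl
      intro i _
      rw [div_eq_mul_inv]
      ring
    · exact Finset.sum_congr rfl fun k _ => inner_eq k
  -- per-block lower bound on the relevant combination
  have step2 : ∀ k ∈ Finset.univ.filter (fun k : Fin n => k.val ≠ 0),
      α k * ((∑ i, m k i ^ 2 / x k i) / 2
        - ∑ q ∈ Finset.univ.filter (fun q => q < k), ∑ i, a k q i * (m q i ^ 2 / x q i))
      ≤ α k * ((∑ i, m k i ^ 2 / x k i)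
          - (∑ i, m k i) * ((Aclm a k x)⁻¹ * Aclm a k m))
        + Aclm a k m * (α k * ((∑ i, x k i) * ((Aclm a k x) ^ 2)⁻¹ * Aclm a k m
          - (Aclm a k x)⁻¹ * (∑ i, m k i))) := by
    intro k hk
    simp only [Finset.mem_filter, Finset.mem_univ, true_and] at hk
    have hH := hA k hk
    have hb := block_est k a ha x m hx hH (hSx k hk)
    have hα0 : (0:ℝ) ≤ α k := by linarith [hα2 k]
    have e : α k * ((∑ i, m k i ^ 2 / x k i)
          - (∑ i, m k i) * ((Aclm a k x)⁻¹ * Aclm a k m))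
        + Aclm a k m * (α k * ((∑ i, x k i) * ((Aclm a k x) ^ 2)⁻¹ * Aclm a k m
          - (Aclm a k x)⁻¹ * (∑ i, m k i)))
        = α k * ((∑ i, m k i ^ 2 / x k i)
            - 2 * (∑ i, m k i) * Aclm a k m / Aclm a k x + (Aclm a k m) ^ 2 / Aclm a k x) := by
      rw [hSx k hk]
      field_simp
      ring
    rw [e]
    exact mul_le_mul_of_nonneg_left hb hα0
  -- global counting bound
  have chain1 : ∑ k, ∑ i, m k i ^ 2 / x k i
      ≤ (∑ k, (α k / 2) * (∑ i, m k i ^ 2 / x k i))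
        - ∑ k ∈ Finset.univ.filter (fun k : Fin n => k.val ≠ 0),
            α k * (∑ q ∈ Finset.univ.filter (fun q => q < k),
              ∑ i, a k q i * (m q i ^ 2 / x q i)) := by
    rw [swap_sum a α (fun q i => m q i ^ 2 / x q i), ← Finset.sum_sub_distrib]
    apply Finset.sum_le_sum
    intro q _
    rw [Finset.mul_sum, ← Finset.sum_sub_distrib]
    apply Finset.sum_le_sum
    intro i _
    have hc := hcoeff q i
    have ht0 : (0:ℝ) ≤ m q i ^ 2 / x q i := div_nonneg (sq_nonneg _) (hx q i).le
    nlinarith [hc, ht0]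
  have chain2 : (∑ k, (α k / 2) * (∑ i, m k i ^ 2 / x k i))
      ≤ α k0 * (∑ i, m k0 i ^ 2 / x k0 i)
        + ∑ k ∈ Finset.univ.filter (fun k : Fin n => k.val ≠ 0),
            (α k / 2) * (∑ i, m k i ^ 2 / x k i) := by
    rw [← Finset.sum_filter_add_sum_filter_not Finset.univ (fun k : Fin n => k.val ≠ 0)
      (fun k => (α k / 2) * (∑ i, m k i ^ 2 / x k i)), e0, Finset.sum_singleton, add_comm]
    have : (α k0 / 2) * (∑ i, m k0 i ^ 2 / x k0 i) ≤ α k0 * (∑ i, m k0 i ^ 2 / x k0 i) := by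
      have := hT0 k0
      nlinarith [hα2 k0]
    linarith
  have chain3 : α k0 * (∑ i, m k0 i ^ 2 / x k0 i)
        + ∑ k ∈ Finset.univ.filter (fun k : Fin n => k.val ≠ 0),
            (α k / 2) * (∑ i, m k i ^ 2 / x k i)
        - ∑ k ∈ Finset.univ.filter (fun k : Fin n => k.val ≠ 0),
            α k * (∑ q ∈ Finset.univ.filter (fun q => q < k),
              ∑ i, a k q i * (m q i ^ 2 / x q i))
      = α k0 * (∑ i, m k0 i ^ 2 / x k0 i)
        + ∑ k ∈ Finset.univ.filter (fun k : Fin n => k.val ≠ 0),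
            α k * ((∑ i, m k i ^ 2 / x k i) / 2
              - ∑ q ∈ Finset.univ.filter (fun q => q < k),
                  ∑ i, a k q i * (m q i ^ 2 / x q i)) := by
    rw [add_sub_assoc, ← Finset.sum_sub_distrib]
    congr 1
    apply Finset.sum_congr rfl
    intro k _
    ring
  have final := Finset.sum_le_sum step2
  rw [step1, add_assoc, ← Finset.sum_add_distrib]
  calc ∑ k, ∑ i, m k i ^ 2 / x k i
      ≤ (∑ k, (α k / 2) * (∑ i, m k i ^ 2 / x k i))
        - ∑ k ∈ Finset.univ.filter (fun k : Fin n => k.val ≠ 0),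
            α k * (∑ q ∈ Finset.univ.filter (fun q => q < k),
              ∑ i, a k q i * (m q i ^ 2 / x q i)) := chain1
    _ ≤ α k0 * (∑ i, m k0 i ^ 2 / x k0 i)
        + ∑ k ∈ Finset.univ.filter (fun k : Fin n => k.val ≠ 0),
            (α k / 2) * (∑ i, m k i ^ 2 / x k i)
        - ∑ k ∈ Finset.univ.filter (fun k : Fin n => k.val ≠ 0),
            α k * (∑ q ∈ Finset.univ.filter (fun q => q < k),
              ∑ i, a k q i * (m q i ^ 2 / x q i)) := by linarith [chain2]
    _ = α k0 * (∑ i, m k0 i ^ 2 / x k0 i)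
        + ∑ k ∈ Finset.univ.filter (fun k : Fin n => k.val ≠ 0),
            α k * ((∑ i, m k i ^ 2 / x k i) / 2
              - ∑ q ∈ Finset.univ.filter (fun q => q < k),
                  ∑ i, a k q i * (m q i ^ 2 / x q i)) := chain3
    _ ≤ _ := by
        apply add_le_add_right final

end qfinal
/-- **Strong convexity of the dilated entropy on chains of scaled extensions of simplexes**
(Proposition 3). With the coefficients chosen recursively as `α_n = 2`,
`α_k = 2 + 2·‖∑_{p>k} α_p·‖a_p‖₀·a_{p,k}‖_∞`, the dilated entropy `ψ` satisfies, at every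
point `x` of `(relint Δ^{s_1}) ◁^{h_1} ⋯ ◁^{h_{n−1}} (relint Δ^{s_n})` and in every
direction `m`, `m^⊤ ∇²ψ(x) m ≥ ‖m‖₂²` and `m^⊤ ∇²ψ(x) m ≥ (1/M_X)·‖m‖₁²`, where
`M_X = max_{x∈X} ‖x‖₁`. -/
theorem simplex_chain_dilated_entropy_strong_convexity
    {n : ℕ} (hn : 0 < n)
    (s : Fin n → ℕ) (hs : ∀ k, 0 < s k)
    (a : (k : Fin n) → (q : Fin n) → Fin (s q) → ℝ)
    (ha : ∀ k q, q < k → ∀ i, a k q i ∈ Set.Icc (0 : ℝ) 1)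
    (H : Fin n → ((k : Fin n) → Fin (s k) → ℝ) → ℝ)
    (hHdef : ∀ k x, H k x = ∑ q ∈ Finset.univ.filter (fun q => q < k), ∑ i, a k q i * x q i)
    (memX memRelX : ((k : Fin n) → Fin (s k) → ℝ) → Prop)
    (hmemX : ∀ x, memX x ↔ ∀ k : Fin n,
        (k.val = 0 → x k ∈ stdSimplex ℝ (Fin (s k))) ∧
        (k.val ≠ 0 → ∃ v ∈ stdSimplex ℝ (Fin (s k)), x k = H k x • v))
    (hmemRelX : ∀ x, memRelX x ↔ ∀ k : Fin n,
        (k.val = 0 → x k ∈ intrinsicInterior ℝ (stdSimplex ℝ (Fin (s k)))) ∧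
        (k.val ≠ 0 → ∃ v ∈ intrinsicInterior ℝ (stdSimplex ℝ (Fin (s k))), x k = H k x • v))
    (hH01 : ∀ x, memX x → ∀ k : Fin n, k.val ≠ 0 → 0 ≤ H k x ∧ H k x ≤ 1)
    (hHpos : ∀ x, memRelX x → ∀ k : Fin n, k.val ≠ 0 → 0 < H k x)
    (α : Fin n → ℝ)
    (hαrec : ∀ k : Fin n, α k = 2 + 2 *
        (Finset.univ.sup' (Finset.univ_nonempty_iff.mpr (Fin.pos_iff_nonempty.mp (hs k)))
          (fun i : Fin (s k) =>
            |∑ p ∈ Finset.univ.filter (fun p => k < p),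
              α p * ((∑ q ∈ Finset.univ.filter (fun q => q < p),
                  (Finset.univ.filter (fun i : Fin (s q) => a p q i ≠ 0)).card : ℕ) : ℝ)
                * a p k i|)))
    (M : ℝ)
    (hM : IsGreatest ((fun x : (k : Fin n) → Fin (s k) → ℝ => ∑ k, ∑ i, |x k i|)
        '' {x | memX x}) M)
    (ψ : ((k : Fin n) → Fin (s k) → ℝ) → ℝ)
    (hψ : ψ = fun x =>
      α ⟨0, hn⟩ * (Real.log ((s ⟨0, hn⟩ : ℝ)) + ∑ i, x ⟨0, hn⟩ i * Real.log (x ⟨0, hn⟩ i))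
      + ∑ k ∈ Finset.univ.filter (fun k : Fin n => k.val ≠ 0),
          α k * (H k x * Real.log ((s k : ℝ))
            + ∑ i, x k i * Real.log (x k i / H k x))) :
    ∀ x, memRelX x → ∀ m : (k : Fin n) → Fin (s k) → ℝ,
      iteratedFDeriv ℝ 2 ψ x ![m, m] ≥ ∑ k, ∑ i, (m k i) ^ 2 ∧
      iteratedFDeriv ℝ 2 ψ x ![m, m] ≥ (1 / M) * (∑ k, ∑ i, |m k i|) ^ 2 := by
  intro x hxmem m
  classical
  have hrel := (hmemRelX x).1 hxmem
  -- basic facts about the point x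
  have hx0 : ∀ k i, 0 < x k i := by
    intro k i
    by_cases hk : k.val = 0
    · exact stdSimplex_intrinsicInterior_pos ((hrel k).1 hk) i
    · obtain ⟨v, hv, hxk⟩ := (hrel k).2 hk
      have : x k i = H k x * v i := by rw [hxk]; simp
      rw [this]
      exact mul_pos (hHpos x hxmem k hk) (stdSimplex_intrinsicInterior_pos hv i)
  have hmemXx : memX x := by
    rw [hmemX]
    intro k
    refine ⟨fun hk => intrinsicInterior_subset ((hrel k).1 hk), fun hk => ?_⟩
    obtain ⟨v, hv, hxk⟩ := (hrel k).2 hk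
    exact ⟨v, intrinsicInterior_subset hv, hxk⟩
  have hSx1 : ∀ k : Fin n, k.val = 0 → ∑ i, x k i = 1 := by
    intro k hk
    exact (intrinsicInterior_subset ((hrel k).1 hk)).2
  have hSxH : ∀ k : Fin n, k.val ≠ 0 → ∑ i, x k i = H k x := by
    intro k hk
    obtain ⟨v, hv, hxk⟩ := (hrel k).2 hk
    have hv1 : ∑ i, v i = 1 := (intrinsicInterior_subset hv).2
    rw [hxk]
    simp only [Pi.smul_apply, smul_eq_mul, ← Finset.mul_sum, hv1, mul_one]
  have hAH : ∀ (k : Fin n) (y : (k : Fin n) → Fin (s k) → ℝ), Aclm a k y = H k y := by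
    intro k y
    rw [Aclm_apply, hHdef]
  have hApos : ∀ k : Fin n, k.val ≠ 0 → 0 < Aclm a k x := by
    intro k hk
    rw [hAH]
    exact hHpos x hxmem k hk
  have hSxA : ∀ k : Fin n, k.val ≠ 0 → ∑ i, x k i = Aclm a k x := by
    intro k hk
    rw [hAH]
    exact hSxH k hk
  have hx1 : ∀ k i, x k i ≤ 1 := by
    intro k i
    have hsum : ∑ i, x k i ≤ 1 := by
      by_cases hk : k.val = 0
      · rw [hSx1 k hk]
      · rw [hSxH k hk]
        exact (hH01 x hmemXx k hk).2
    calc x k i ≤ ∑ i, x k i :=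
          Finset.single_le_sum (fun j _ => (hx0 k j).le) (Finset.mem_univ i)
      _ ≤ 1 := hsum
  have hM1 : ∑ k, ∑ i, x k i ≤ M := by
    have := hM.2 ⟨x, hmemXx, rfl⟩
    calc ∑ k, ∑ i, x k i = ∑ k, ∑ i, |x k i| := by
          apply Finset.sum_congr rfl; intro k _
          apply Finset.sum_congr rfl; intro i _
          rw [abs_of_pos (hx0 k i)]
      _ ≤ M := this
  have hMpos : 0 < M := by
    have h1 : (1:ℝ) ≤ ∑ k, ∑ i, x k i := by
      have := hSx1 ⟨0, hn⟩ rfl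
      calc (1:ℝ) = ∑ i, x ⟨0, hn⟩ i := this.symm
        _ ≤ ∑ k, ∑ i, x k i := Finset.single_le_sum
            (f := fun k : Fin n => ∑ i, x k i)
            (fun k _ => Finset.sum_nonneg fun i _ => (hx0 k i).le) (Finset.mem_univ (⟨0, hn⟩ : Fin n))
    linarith
  -- rewrite ψ to use Aclm
  have hψA : ψ = fun z : (k : Fin n) → Fin (s k) → ℝ =>
      α ⟨0, hn⟩ * (Real.log ((s ⟨0, hn⟩ : ℝ)) + ∑ i, z ⟨0, hn⟩ i * Real.log (z ⟨0, hn⟩ i))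
      + ∑ k ∈ Finset.univ.filter (fun k : Fin n => k.val ≠ 0),
          α k * (Aclm a k z * Real.log ((s k : ℝ))
            + ∑ i, z k i * Real.log (z k i / Aclm a k z)) := by
    rw [hψ]
    funext z
    simp only [hHdef, ← Aclm_apply]
  rw [hψA, second_deriv_eq hn a α m hx0 hApos]
  have hα2 := alpha_ge_two hs a α hαrec
  have hcoeff := coeff_bound hs a ha α hαrec
  have hQ := Qbound hn a ha α hα2 hcoeff x m hx0 hApos hSxA
  -- sum of m²/x dominates both norms
  have hT2 : ∑ k, ∑ i, (m k i) ^ 2 ≤ ∑ k, ∑ i, m k i ^ 2 / x k i := by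
    apply Finset.sum_le_sum; intro k _
    apply Finset.sum_le_sum; intro i _
    rw [le_div_iff₀ (hx0 k i)]
    nlinarith [sq_nonneg (m k i), hx1 k i, hx0 k i]
  have hT1 : (1 / M) * (∑ k, ∑ i, |m k i|) ^ 2 ≤ ∑ k, ∑ i, m k i ^ 2 / x k i := by
    have hcs : (∑ k, ∑ i, |m k i|) ^ 2
        ≤ (∑ k, ∑ i, x k i) * ∑ k, ∑ i, m k i ^ 2 / x k i := by
      rw [Finset.sum_sigma' Finset.univ (fun _ => Finset.univ) (fun k i => |m k i|),
        Finset.sum_sigma' Finset.univ (fun _ => Finset.univ) (fun k i => x k i),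
        Finset.sum_sigma' Finset.univ (fun _ => Finset.univ) (fun k i => m k i ^ 2 / x k i)]
      apply Finset.sum_sq_le_sum_mul_sum_of_sq_eq_mul
      · exact fun p _ => (hx0 p.1 p.2).le
      · exact fun p _ => div_nonneg (sq_nonneg _) (hx0 p.1 p.2).le
      · intro p _
        rw [sq_abs, mul_div_assoc', mul_comm, mul_div_assoc, div_self (hx0 p.1 p.2).ne',
          mul_one]
    have hT0 : (0:ℝ) ≤ ∑ k, ∑ i, m k i ^ 2 / x k i :=
      Finset.sum_nonneg fun k _ => Finset.sum_nonneg fun i _ =>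
        div_nonneg (sq_nonneg _) (hx0 k i).le
    have h2 : (∑ k, ∑ i, |m k i|) ^ 2 ≤ M * ∑ k, ∑ i, m k i ^ 2 / x k i :=
      le_trans hcs (mul_le_mul_of_nonneg_right hM1 hT0)
    rw [one_div]
    calc M⁻¹ * (∑ k, ∑ i, |m k i|) ^ 2
        ≤ M⁻¹ * (M * ∑ k, ∑ i, m k i ^ 2 / x k i) :=
          mul_le_mul_of_nonneg_left h2 (inv_pos.mpr hMpos).le
      _ = ∑ k, ∑ i, m k i ^ 2 / x k i := by
          rw [← mul_assoc, inv_mul_cancel₀ hMpos.ne', one_mul]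
  exact ⟨le_trans hT2 hQ, le_trans hT1 hQ⟩
end
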